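/- arXiv:1601.03724 — 6 statements merged into one kernel-verified Lean document; each statement's English description precedes it below -/
import Mathlib

section
/- (Andréief's identity) Let (X, μ) be a σ-finite measure space, let n ≥ 1, and let f_1,…,f_n and g_1,…,g_n : X → ℂ be measurable functions such that f_j · g_k is μ-integrable for all j, k = 1,…,n. Then the function (x_1,…,x_n) ↦ det[f_j(x_k)]_{j,k=1..n} · det[g_j(x_k)]_{j,k=1..n} is integrable with respect to the n-fold product measure μ^{⊗n}, and ∫_{X^n} det[f_j(x_k)]_{j,k=1..n} det[g_j(x_k)]_{j,k=1..n} dμ^{⊗n}(x) = n! · det[ ∫_X f_j(x) g_k(x) dμ(x) ]_{j,k=1..n}. -/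
open MeasureTheory Filter Set

noncomputable section

/-- Lebesgue measure on n×n complex matrices: product of Lebesgue measures of all
(real and imaginary parts of the) entries. -/
instance matrixMeasureSpace (n : ℕ) : MeasureSpace (Matrix (Fin n) (Fin n) ℂ) :=
  inferInstanceAs (MeasureSpace (Fin n → Fin n → ℂ))

/-- Vandermonde product `Δ_n(a) = ∏_{j<k} (a k - a j)`. -/
def vdm {R : Type*} [CommRing R] {n : ℕ} (a : Fin n → R) : R :=
  ∏ j : Fin n, ∏ k ∈ Finset.Ioi j, (a k - a j)

/-- Squared singular values of `g`, i.e. the eigenvalues of `gᴴ * g`. -/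
def sqSV {n : ℕ} (g : Matrix (Fin n) (Fin n) ℂ) : Fin n → ℝ :=
  (Matrix.isHermitian_conjTranspose_mul_self g).eigenvalues

/-- `f(ugv) = f(g)` for all unitary `u, v`. -/
def BiUnitarilyInvariant {n : ℕ} (f : Matrix (Fin n) (Fin n) ℂ → ℝ) : Prop :=
  ∀ u ∈ Matrix.unitaryGroup (Fin n) ℂ, ∀ v ∈ Matrix.unitaryGroup (Fin n) ℂ,
    ∀ g : Matrix (Fin n) (Fin n) ℂ, f (u * g * v) = f g

/-- `f` has `ρ` as joint density of its squared singular values: for every bounded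
measurable symmetric test function `φ` one has `∫ φ(λ(gᴴg)) f(g) dg = ∫_{(0,∞)^n} φ ρ`. -/
def HasSqSVDensity {n : ℕ} (f : Matrix (Fin n) (Fin n) ℂ → ℝ)
    (ρ : (Fin n → ℝ) → ℝ) : Prop :=
  ∀ φ : (Fin n → ℝ) → ℝ, Measurable φ → (∃ M, ∀ x, |φ x| ≤ M) →
    (∀ σ : Equiv.Perm (Fin n), ∀ x, φ (x ∘ σ) = φ x) →
    ∫ g : Matrix (Fin n) (Fin n) ℂ, φ (sqSV g) * f g
      = ∫ a in {a : Fin n → ℝ | ∀ i, 0 < a i}, φ a * ρ a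

/-- The Euler operator `ω ↦ (a ↦ -a * ω'(a))`. -/
def eulerOp (f : ℝ → ℝ) : ℝ → ℝ := fun a => -a * deriv f a

/-- Multiplicative convolution on `(0,∞)`, real-valued:
`(f ⊛ g)(x) = ∫_0^∞ f(x/y) g(y) dy/y`. -/
def mconvR (f g : ℝ → ℝ) (x : ℝ) : ℝ := ∫ y in Set.Ioi (0:ℝ), f (x / y) * g y / y

/-- Multiplicative convolution on `(0,∞)`, complex-valued. -/
def mconvC (f g : ℝ → ℂ) (x : ℝ) : ℂ := ∫ y in Set.Ioi (0:ℝ), f (x / y) * g y / (y : ℂ)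

/-- Multiplicative convolution of matrix densities:
`(f₁ ⊛ f₂)(g) = ∫_{det y ≠ 0} f₁(g y⁻¹) f₂(y) |det y|^{-2n} dy`. -/
def matConv {n : ℕ} (f₁ f₂ : Matrix (Fin n) (Fin n) ℂ → ℝ)
    (g : Matrix (Fin n) (Fin n) ℂ) : ℝ :=
  ∫ y in {y : Matrix (Fin n) (Fin n) ℂ | y.det ≠ 0},
    f₁ (g * y⁻¹) * f₂ y / ‖y.det‖ ^ (2 * n)

/-- Complex power `x^w := exp(w ln x)` of a positive real. -/
def cpowP (x : ℝ) (w : ℂ) : ℂ := Complex.exp (w * Real.log x)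

/-- The vector `ρ' = ((2j+n-1)/2)_{j=1..n}`. -/
def rhoV (n : ℕ) : Fin n → ℂ := fun j => (2 * ((j : ℕ) + 1) + (n : ℂ) - 1) / 2

/-- The spherical function of `GL(n, ℂ)`:
`φ_s(g) = (Δ(ρ')/Δ(s)) det[λ_j(gᴴg)^{s_k+(n-1)/2}] / Δ(λ(gᴴg))`. -/
def sphericalFn {n : ℕ} (s : Fin n → ℂ) (g : Matrix (Fin n) (Fin n) ℂ) : ℂ :=
  vdm (rhoV n) / vdm s *
    Matrix.det (Matrix.of fun j k : Fin n => cpowP (sqSV g j) (s k + ((n : ℂ) - 1) / 2)) /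
    vdm (fun j : Fin n => (sqSV g j : ℂ))

/-- Mellin transform `Mw(s) = ∫_0^∞ w(x) x^{s-1} dx` of a real function on `(0,∞)`. -/
def mellinR (w : ℝ → ℝ) (s : ℂ) : ℂ :=
  ∫ x in Set.Ioi (0:ℝ), (w x : ℂ) * cpowP x (s - 1)

/-- Mellin transform of a complex function on `(0,∞)`. -/
def mellinCC (w : ℝ → ℂ) (s : ℂ) : ℂ :=
  ∫ x in Set.Ioi (0:ℝ), w x * cpowP x (s - 1)

lemma andreief_comb {n : ℕ} (A : Matrix (Fin n) (Fin n) ℂ) :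
    ∑ σ : Equiv.Perm (Fin n), ∑ τ : Equiv.Perm (Fin n),
      ((((Equiv.Perm.sign σ : ℤ) : ℂ)) * (((Equiv.Perm.sign τ : ℤ) : ℂ))) *
        ∏ k, A (σ k) (τ k)
      = (Nat.factorial n : ℂ) * A.det := by
  have hinner : ∀ σ : Equiv.Perm (Fin n),
      (∑ τ : Equiv.Perm (Fin n),
        ((((Equiv.Perm.sign σ : ℤ) : ℂ)) * (((Equiv.Perm.sign τ : ℤ) : ℂ))) *
          ∏ k, A (σ k) (τ k)) = A.det := by
    intro σ
    rw [← Equiv.sum_comp (Equiv.mulRight σ)]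
    have h1 : ∀ π : Equiv.Perm (Fin n),
        ((((Equiv.Perm.sign σ : ℤ) : ℂ)) * (((Equiv.Perm.sign (π * σ) : ℤ) : ℂ))) *
          ∏ k, A (σ k) ((π * σ) k)
        = (((Equiv.Perm.sign π : ℤ) : ℂ)) * ∏ k, A k (π k) := by
      intro π
      have hp : ∏ k, A (σ k) ((π * σ) k) = ∏ k, A k (π k) := by
        have := Equiv.prod_comp σ (fun j => A j (π j))
        simpa using this
      rw [hp, map_mul]
      rcases Int.units_eq_one_or (Equiv.Perm.sign σ) with h | h <;> simp [h]
    calc ∑ π : Equiv.Perm (Fin n),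
          ((((Equiv.Perm.sign σ : ℤ) : ℂ)) * (((Equiv.Perm.sign ((Equiv.mulRight σ) π) : ℤ) : ℂ))) *
            ∏ k, A (σ k) (((Equiv.mulRight σ) π) k)
        = ∑ π : Equiv.Perm (Fin n), (((Equiv.Perm.sign π : ℤ) : ℂ)) * ∏ k, A k (π k) :=
          Finset.sum_congr rfl (fun π _ => h1 π)
      _ = A.det := by
          rw [← Matrix.det_transpose A, Matrix.det_apply']
          simp [Matrix.transpose_apply]
  rw [Finset.sum_congr rfl (fun σ _ => hinner σ), Finset.sum_const, Finset.card_univ,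
    Fintype.card_perm, Fintype.card_fin, nsmul_eq_mul]

/-- Andréief's identity. -/
theorem andreief_identity {X : Type*} [MeasurableSpace X] (μ : Measure X) [SigmaFinite μ]
    (n : ℕ) (hn : 1 ≤ n) (f g : Fin n → X → ℂ)
    (hf : ∀ j, Measurable (f j)) (hg : ∀ j, Measurable (g j))
    (hint : ∀ j k, Integrable (fun x => f j x * g k x) μ) :
    Integrable (fun x : Fin n → X =>
        Matrix.det (Matrix.of fun j k : Fin n => f j (x k)) *
        Matrix.det (Matrix.of fun j k : Fin n => g j (x k)))
      (Measure.pi fun _ => μ) ∧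
    (∫ x : Fin n → X,
        Matrix.det (Matrix.of fun j k : Fin n => f j (x k)) *
        Matrix.det (Matrix.of fun j k : Fin n => g j (x k)) ∂(Measure.pi fun _ => μ))
      = (Nat.factorial n : ℂ) *
          Matrix.det (Matrix.of fun j k : Fin n => ∫ x, f j x * g k x ∂μ) := by
  classical
  letI : MeasureSpace X := ⟨μ⟩
  haveI : SigmaFinite (volume : Measure X) := ‹SigmaFinite μ›
  have hvol : (Measure.pi fun _ : Fin n => μ) = (volume : Measure (Fin n → X)) := rfl
  -- pointwise expansion
  have key : ∀ x : Fin n → X,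
      Matrix.det (Matrix.of fun j k : Fin n => f j (x k)) *
        Matrix.det (Matrix.of fun j k : Fin n => g j (x k))
      = ∑ σ : Equiv.Perm (Fin n), ∑ τ : Equiv.Perm (Fin n),
          ((((Equiv.Perm.sign σ : ℤ) : ℂ)) * (((Equiv.Perm.sign τ : ℤ) : ℂ))) *
            ∏ k, (f (σ k) (x k) * g (τ k) (x k)) := by
    intro x
    rw [Matrix.det_apply, Matrix.det_apply, Finset.sum_mul_sum]
    refine Finset.sum_congr rfl fun σ _ => Finset.sum_congr rfl fun τ _ => ?_
    simp only [Matrix.of_apply, Units.smul_def, zsmul_eq_mul, Finset.prod_mul_distrib]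
    ring
  have hterm : ∀ σ τ : Equiv.Perm (Fin n),
      Integrable (fun x : Fin n → X => ∏ k, (f (σ k) (x k) * g (τ k) (x k))) volume :=
    fun σ τ => Integrable.fintype_prod (f := fun k y => f (σ k) y * g (τ k) y)
      (fun k => hint (σ k) (τ k))
  have hIntSum : Integrable (fun x : Fin n → X =>
      ∑ σ : Equiv.Perm (Fin n), ∑ τ : Equiv.Perm (Fin n),
        ((((Equiv.Perm.sign σ : ℤ) : ℂ)) * (((Equiv.Perm.sign τ : ℤ) : ℂ))) *
          ∏ k, (f (σ k) (x k) * g (τ k) (x k))) volume :=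
    integrable_finset_sum _ (fun σ _ => integrable_finset_sum _ (fun τ _ =>
      ((hterm σ τ).const_mul _)))
  have hInt : Integrable (fun x : Fin n → X =>
      Matrix.det (Matrix.of fun j k : Fin n => f j (x k)) *
        Matrix.det (Matrix.of fun j k : Fin n => g j (x k))) volume :=
    hIntSum.congr (Eventually.of_forall fun x => (key x).symm)
  refine ⟨hvol ▸ hInt, ?_⟩
  have hI : (∫ x : Fin n → X,
      Matrix.det (Matrix.of fun j k : Fin n => f j (x k)) *
        Matrix.det (Matrix.of fun j k : Fin n => g j (x k)) ∂(Measure.pi fun _ => μ))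
      = ∑ σ : Equiv.Perm (Fin n), ∑ τ : Equiv.Perm (Fin n),
          ((((Equiv.Perm.sign σ : ℤ) : ℂ)) * (((Equiv.Perm.sign τ : ℤ) : ℂ))) *
            ∏ k, ∫ x : X, f (σ k) x * g (τ k) x := by
    rw [hvol]
    rw [integral_congr_ae (Eventually.of_forall key)]
    rw [integral_finset_sum _ (fun σ _ => integrable_finset_sum _ (fun τ _ =>
      ((hterm σ τ).const_mul _)))]
    refine Finset.sum_congr rfl fun σ _ => ?_
    rw [integral_finset_sum _ (fun τ _ => ((hterm σ τ).const_mul _))]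
    refine Finset.sum_congr rfl fun τ _ => ?_
    rw [integral_const_mul, ← hvol,
      integral_fintype_prod_eq_prod (f := fun k y => f (σ k) y * g (τ k) y)]
    rfl
  rw [hI]
  exact andreief_comb (Matrix.of fun j k : Fin n => ∫ x, f j x * g k x ∂μ)


end
end

section
/- (Stirling bound on vertical strips) Let a ≤ b be real numbers. Then there exist constants C > 0 and T > 0 such that for every real c with a ≤ c ≤ b and every real t with |t| ≥ T, the complex Gamma function satisfies |Γ(c + it)| ≤ C · |t|^{c − 1/2} · e^{−π |t| / 2}. -/
open MeasureTheory Filter Set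

noncomputable section

section StirlingAux

open Real Filter

noncomputable def ff (t u : ℝ) : ℝ := Real.log (1 + t^2/u^2)
noncomputable def AA (t u : ℝ) : ℝ := u * ff t u + 2*t*Real.arctan (u/t)

lemma ff_nonneg (t : ℝ) (u : ℝ) : 0 ≤ ff t u :=
  Real.log_nonneg (by nlinarith [sq_nonneg (t/u), div_pow t u 2])

lemma one_add_pos {t u : ℝ} : (0:ℝ) < 1 + t^2/u^2 := by positivity

lemma hasDerivAt_ff {t : ℝ} (ht : t ≠ 0) {u : ℝ} (hu : 0 < u) :
    HasDerivAt (ff t) (-2*t^2/(u*(u^2+t^2))) u := by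
  have h1 : HasDerivAt (fun u : ℝ => 1 + t^2/u^2)
      ((0 * u^2 - t^2 * (2*u^(2-1)))/(u^2)^2) u :=
    ((hasDerivAt_const u (t^2)).div (hasDerivAt_pow 2 u) (pow_ne_zero 2 hu.ne')).const_add 1
  have h2 := h1.log (ne_of_gt one_add_pos)
  convert h2 using 1
  · rfl
  have hu' : u ≠ 0 := hu.ne'
  have h3 : u^2 + t^2 ≠ 0 := by positivity
  field_simp
  ring

lemma convexOn_ff {t : ℝ} (ht : t ≠ 0) : ConvexOn ℝ (Set.Ioi 0) (ff t) := by
  apply MonotoneOn.convexOn_of_deriv (convex_Ioi 0)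
  · exact fun u hu => (hasDerivAt_ff ht hu).continuousAt.continuousWithinAt
  · rw [interior_Ioi]
    exact fun u hu => (hasDerivAt_ff ht hu).differentiableAt.differentiableWithinAt
  · rw [interior_Ioi]
    intro u hu v hv huv
    rw [(hasDerivAt_ff ht hu).deriv, (hasDerivAt_ff ht hv).deriv]
    have h1 : (0:ℝ) < u*(u^2+t^2) := by
      have := Set.mem_Ioi.1 hu; positivity
    have h2 : (0:ℝ) < v*(v^2+t^2) := by
      have := Set.mem_Ioi.1 hv; positivity
    rw [div_le_div_iff₀ h1 h2]
    have hu0 : (0:ℝ) < u := hu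
    nlinarith [mul_nonneg (sub_nonneg.2 huv) (sq_nonneg t), pow_le_pow_left₀ hu0.le huv 3, sq_nonneg t]

lemma contOn_ff {t : ℝ} (ht : t ≠ 0) {s : Set ℝ} (hs : s ⊆ Set.Ioi 0) :
    ContinuousOn (ff t) s :=
  fun u hu => ((hasDerivAt_ff ht (hs hu)).continuousAt).continuousWithinAt

lemma trapezoid {t : ℝ} (ht : t ≠ 0) {p : ℝ} (hp : 0 < p) :
    ∫ x in p..(p+1), ff t x ≤ (ff t p + ff t (p+1))/2 := by
  have hle : p ≤ p + 1 := by linarith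
  have hsub : Set.Icc p (p+1) ⊆ Set.Ioi 0 := fun x hx => lt_of_lt_of_le hp hx.1
  have hconv := (convexOn_ff ht).subset hsub (convex_Icc _ _)
  have key : ∀ x ∈ Set.Icc p (p+1),
      ff t x ≤ ff t p + (x - p)*(ff t (p+1) - ff t p) := by
    intro x hx
    have h2 := hconv.2 (Set.left_mem_Icc.2 hle) (Set.right_mem_Icc.2 hle)
      (by linarith [hx.2] : (0:ℝ) ≤ p+1-x) (by linarith [hx.1] : (0:ℝ) ≤ x-p) (by ring)
    have hx' : (p+1-x) • p + (x-p) • (p+1) = x := by simp only [smul_eq_mul]; ring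
    rw [hx'] at h2
    simp only [smul_eq_mul] at h2
    nlinarith [h2]
  have hint1 : IntervalIntegrable (ff t) MeasureTheory.volume p (p+1) := by
    apply ContinuousOn.intervalIntegrable
    rw [Set.uIcc_of_le hle]
    exact contOn_ff ht hsub
  have hint2 : IntervalIntegrable (fun x => ff t p + (x - p)*(ff t (p+1) - ff t p))
      MeasureTheory.volume p (p+1) := by
    apply Continuous.intervalIntegrable; fun_prop
  calc ∫ x in p..(p+1), ff t x
      ≤ ∫ x in p..(p+1), (ff t p + (x - p)*(ff t (p+1) - ff t p)) :=
        intervalIntegral.integral_mono_on hle hint1 hint2 key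
    _ = (ff t p + ff t (p+1))/2 := by
        have hd : ∀ x ∈ Set.uIcc p (p+1), HasDerivAt
            (fun x => ff t p * x + (x-p)^2/2*(ff t (p+1) - ff t p))
            (ff t p + (x - p)*(ff t (p+1) - ff t p)) x := by
          intro x _
          have h1 : HasDerivAt (fun x:ℝ => (x-p)^2/2*(ff t (p+1) - ff t p))
              ((2*(x-p)^(2-1)*1)/2*(ff t (p+1) - ff t p)) x := by
            exact ((((hasDerivAt_id x).sub_const p).pow 2).div_const 2).mul_const _
          have h2 := ((hasDerivAt_id x).const_mul (ff t p)).add h1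
          refine h2.congr_deriv ?_
          ring
        rw [intervalIntegral.integral_eq_sub_of_hasDerivAt hd hint2]
        ring

lemma hasDerivAt_AA {t : ℝ} (ht : 0 < t) {u : ℝ} (hu : 0 < u) :
    HasDerivAt (AA t) (ff t u) u := by
  have h1 : HasDerivAt (fun u : ℝ => u * ff t u)
      (1 * ff t u + u * (-2*t^2/(u*(u^2+t^2)))) u :=
    (hasDerivAt_id u).mul (hasDerivAt_ff ht.ne' hu)
  have h2 : HasDerivAt (fun u : ℝ => Real.arctan (u/t) * (2*t))
      ((1 / (1 + (u/t)^2) * (1/t)) * (2*t)) u :=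
    (((hasDerivAt_id u).div_const t).arctan).mul_const (2*t)
  have h3 := h1.add h2
  have hAA : AA t = fun u => u * ff t u + Real.arctan (u/t) * (2*t) := by
    funext v; unfold AA; ring
  rw [hAA]
  refine h3.congr_deriv ?_
  have h4 : u^2+t^2 ≠ 0 := by positivity
  have ht' : t ≠ 0 := ht.ne'
  have hu' : u ≠ 0 := hu.ne'
  field_simp
  ring

lemma sum_ge {t : ℝ} (ht : 0 < t) {c : ℝ} (hc : 0 < c) (n : ℕ) :
    AA t (c+n) - AA t c + ff t c / 2 + ff t (c+n) / 2
      ≤ ∑ j ∈ Finset.range (n+1), ff t (c+j) := by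
  induction n with
  | zero => simp
  | succ n ih =>
    have hcn : (0:ℝ) < c + n := by positivity
    have hint : ∫ x in (c+n)..(c+n+1), ff t x = AA t (c+n+1) - AA t (c+n) := by
      apply intervalIntegral.integral_eq_sub_of_hasDerivAt
      · intro x hx
        rw [Set.uIcc_of_le (by linarith)] at hx
        exact hasDerivAt_AA ht (lt_of_lt_of_le hcn hx.1)
      · apply ContinuousOn.intervalIntegrable
        rw [Set.uIcc_of_le (by linarith)]
        exact contOn_ff ht.ne' (fun x hx => lt_of_lt_of_le hcn hx.1)
    have htr := trapezoid ht.ne' hcn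
    rw [hint] at htr
    rw [Finset.sum_range_succ]
    push_cast at ih ⊢
    ring_nf at ih htr ⊢
    linarith

lemma abs_fact {t : ℝ} (ht : 0 < t) {u : ℝ} (hu : 0 < u) :
    ‖(↑u + ↑t*Complex.I : ℂ)‖ = u * Real.exp (ff t u / 2) := by
  have h1 : ‖(↑u + ↑t*Complex.I : ℂ)‖ = Real.sqrt (u^2 + t^2) := by
    rw [Complex.norm_def, Complex.normSq_apply]
    simp
    ring_nf
  rw [h1]
  rw [show u^2 + t^2 = (u * Real.exp (ff t u / 2))^2 by
    have he : Real.exp (ff t u) = 1 + t^2/u^2 := Real.exp_log one_add_pos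
    have : (Real.exp (ff t u / 2))^2 = Real.exp (ff t u) := by
      rw [sq, ← Real.exp_add]; ring_nf
    rw [mul_pow, this, he]
    field_simp]
  exact Real.sqrt_sq (by positivity)

lemma gammaSeq_abs {t : ℝ} (ht : 0 < t) {c : ℝ} (hc : 0 < c) {n : ℕ} (hn : 0 < n) :
    ‖Complex.GammaSeq (↑c + ↑t*Complex.I) n‖
      = Real.GammaSeq c n
        * Real.exp (-(∑ j ∈ Finset.range (n+1), ff t (c+j))/2) := by
  have hnR : (0:ℝ) < n := Nat.cast_pos.2 hn
  unfold Complex.GammaSeq Real.GammaSeq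
  rw [norm_div, norm_mul]
  have e1 : ‖(n:ℂ) ^ (↑c + ↑t*Complex.I)‖ = (n:ℝ) ^ c := by
    rw [show ((n:ℕ):ℂ) = (((n:ℕ):ℝ):ℂ) by push_cast; rfl,
      Complex.norm_cpow_eq_rpow_re_of_pos hnR]
    norm_num
  have e2 : ‖((Nat.factorial n : ℕ) : ℂ)‖ = ((Nat.factorial n : ℕ) : ℝ) := by
    rw [show ((Nat.factorial n : ℕ):ℂ) = (((Nat.factorial n : ℕ):ℝ):ℂ) by push_cast; rfl]
    exact Complex.norm_of_nonneg (by positivity)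
  have e3 : ‖∏ j ∈ Finset.range (n+1), (↑c + ↑t*Complex.I + (j:ℕ))‖
      = (∏ j ∈ Finset.range (n+1), (c+(j:ℕ)))
        * Real.exp ((∑ j ∈ Finset.range (n+1), ff t (c+j))/2) := by
    rw [norm_prod]
    have : ∀ j ∈ Finset.range (n+1),
        ‖↑c + ↑t*Complex.I + (j:ℕ)‖
          = (c+(j:ℕ)) * Real.exp (ff t (c+j) / 2) := by
      intro j _
      have h0 : (↑c + ↑t*Complex.I + (j:ℕ)) = (↑(c+(j:ℕ)) + ↑t*Complex.I : ℂ) := by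
        push_cast; ring
      rw [h0, abs_fact ht (by positivity)]
    rw [Finset.prod_congr rfl this, Finset.prod_mul_distrib, ← Real.exp_sum,
      Finset.sum_div]
  rw [e1, e2, e3]
  have hP : (0:ℝ) < ∏ j ∈ Finset.range (n+1), (c+(j:ℕ)) := by
    apply Finset.prod_pos; intro j _; positivity
  have hE : Real.exp ((∑ j ∈ Finset.range (n+1), ff t (c+j))/2) ≠ 0 := Real.exp_ne_zero _
  rw [neg_div, Real.exp_neg]
  field_simp

lemma arctan_le_self' {x : ℝ} (hx : 0 ≤ x) : Real.arctan x ≤ x := by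
  rcases eq_or_lt_of_le hx with h | h
  · simp [← h]
  · have h1 : 0 < Real.arctan x := by
      have := Real.arctan_strictMono h
      rwa [Real.arctan_zero] at this
    have h2 := Real.lt_tan h1 (Real.arctan_lt_pi_div_two x)
    rw [Real.tan_arctan] at h2
    exact h2.le

lemma gammaSeqR_pos {c : ℝ} (hc : 0 < c) {n : ℕ} (hn : 0 < n) : 0 < Real.GammaSeq c n := by
  unfold Real.GammaSeq
  have h1 : (0:ℝ) < ∏ j ∈ Finset.range (n+1), (c+(j:ℕ)) :=
    Finset.prod_pos fun j _ => by positivity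
  have h2 : (0:ℝ) < (n:ℝ) ^ c := Real.rpow_pos_of_pos (Nat.cast_pos.2 hn) c
  have h3 : (0:ℝ) < (Nat.factorial n : ℝ) := Nat.cast_pos.2 (Nat.factorial_pos n)
  positivity

lemma core {L : ℝ} (hL : 1 ≤ L) :
    ∃ C > (0:ℝ), ∀ c : ℝ, 1 ≤ c → c ≤ L → ∀ t : ℝ, 2 ≤ t →
      ‖Complex.Gamma (↑c + ↑t*Complex.I)‖
        ≤ C * t ^ (c - 1/2) * Real.exp (-(Real.pi*t)/2) := by
  obtain ⟨M, hM⟩ := (isCompact_Icc (a := (1:ℝ)) (b := L)).exists_bound_of_continuousOn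
    (f := Real.Gamma) (fun x hx => by
      refine (Real.differentiableAt_Gamma fun m => ?_).continuousAt.continuousWithinAt
      have h1 : (1:ℝ) ≤ x := hx.1
      have h2 : (0:ℝ) ≤ (m:ℝ) := Nat.cast_nonneg m
      intro h
      rw [h] at h1
      linarith)
  set K := Real.exp (L*Real.log 2/2 + L + Real.log L/2) with hK
  refine ⟨(max M 1) * K, by positivity, fun c hc1 hcL t ht2 => ?_⟩
  have ht0 : (0:ℝ) < t := by linarith
  have hc0 : (0:ℝ) < c := by linarith
  have ht1 : (1:ℝ) ≤ t := by linarith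
  set s : ℂ := ↑c + ↑t*Complex.I with hs
  -- eventual bound
  have h_ev : ∀ᶠ n : ℕ in atTop, ‖Complex.GammaSeq s n‖
      ≤ Real.GammaSeq c n
        * Real.exp (-(AA t (c+n) - AA t c + ff t c/2)/2) := by
    filter_upwards [eventually_ge_atTop 1] with n hn
    rw [hs, gammaSeq_abs ht0 hc0 hn]
    have h1 := sum_ge ht0 hc0 n
    have h2 := ff_nonneg t (c+n)
    have h3 := (gammaSeqR_pos hc0 hn).le
    apply mul_le_mul_of_nonneg_left _ h3
    apply Real.exp_le_exp.2
    have : AA t (c+n) - AA t c + ff t c/2 ≤ ∑ j ∈ Finset.range (n+1), ff t (c+j) := by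
      linarith
    linarith [neg_div 2 (∑ j ∈ Finset.range (n+1), ff t (c+j))]
  -- tendsto of RHS
  have hcn : Tendsto (fun n : ℕ => c + (n:ℝ)) atTop atTop :=
    tendsto_atTop_add_const_left atTop c tendsto_natCast_atTop_atTop
  have part1 : Tendsto (fun n : ℕ => (c+(n:ℝ)) * ff t (c+n)) atTop (nhds 0) := by
    apply squeeze_zero (g := fun n : ℕ => t^2/(c+(n:ℝ)))
    · intro n
      have : (0:ℝ) < c + (n:ℝ) := by positivity
      exact mul_nonneg this.le (ff_nonneg t _)
    · intro n
      have hpos : (0:ℝ) < c + (n:ℝ) := by positivity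
      have hlog : ff t (c+(n:ℝ)) ≤ t^2/(c+(n:ℝ))^2 := by
        have := Real.log_le_sub_one_of_pos (one_add_pos (t := t) (u := c+(n:ℝ)))
        unfold ff; linarith
      calc (c+(n:ℝ)) * ff t (c+n) ≤ (c+(n:ℝ)) * (t^2/(c+(n:ℝ))^2) :=
            mul_le_mul_of_nonneg_left hlog hpos.le
        _ = t^2/(c+(n:ℝ)) := by field_simp
    · exact Tendsto.div_atTop tendsto_const_nhds hcn
  have part2 : Tendsto (fun n : ℕ => 2*t*Real.arctan ((c+(n:ℝ))/t)) atTop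
      (nhds (2*t*(Real.pi/2))) := by
    exact (((Real.tendsto_arctan_atTop.mono_right nhdsWithin_le_nhds).comp
      (hcn.atTop_div_const ht0))).const_mul (2*t)
  have hA : Tendsto (fun n : ℕ => AA t (c+(n:ℝ))) atTop (nhds (Real.pi*t)) := by
    have := part1.add part2
    rw [zero_add] at this
    have heq : 2*t*(Real.pi/2) = Real.pi*t := by ring
    rw [heq] at this
    exact this.congr (fun n => by unfold AA; ring)
  have hRHS : Tendsto (fun n : ℕ => Real.GammaSeq c n
      * Real.exp (-(AA t (c+n) - AA t c + ff t c/2)/2)) atTop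
      (nhds (Real.Gamma c * Real.exp (-(Real.pi*t - AA t c + ff t c/2)/2))) := by
    apply (Real.GammaSeq_tendsto_Gamma c).mul
    apply (Real.continuous_exp.tendsto _).comp
    exact (((hA.sub_const (AA t c)).add_const (ff t c/2)).neg).div_const 2
  have hLHS : Tendsto (fun n : ℕ => ‖Complex.GammaSeq s n‖) atTop
      (nhds ‖Complex.Gamma s‖) :=
    (continuous_norm.tendsto _).comp (Complex.GammaSeq_tendsto_Gamma s)
  have key := le_of_tendsto_of_tendsto hLHS hRHS h_ev
  -- final estimate
  set F := ff t c with hF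
  set A0 := AA t c with hA0
  have hlogt0 : (0:ℝ) ≤ Real.log t := Real.log_nonneg ht1
  have hlog2 : (0:ℝ) ≤ Real.log 2 := Real.log_nonneg (by norm_num)
  have hF1 : F ≤ Real.log 2 + 2*Real.log t := by
    have h1 : 1 + t^2/c^2 ≤ 2*t^2 := by
      have hc2 : (1:ℝ) ≤ c^2 := by nlinarith
      have : t^2/c^2 ≤ t^2 := by
        rw [div_le_iff₀ (by positivity)]; nlinarith
      nlinarith
    have h2 := Real.log_le_log one_add_pos h1
    rw [Real.log_mul (by norm_num) (by positivity), Real.log_pow] at h2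
    unfold F; unfold ff; push_cast at h2; linarith
  have hF2 : 2*Real.log t - 2*Real.log L ≤ F := by
    have h1 : t^2/c^2 ≤ 1 + t^2/c^2 := by linarith
    have h2 := Real.log_le_log (by positivity) h1
    rw [Real.log_div (by positivity) (by positivity), Real.log_pow, Real.log_pow] at h2
    have h3 : Real.log c ≤ Real.log L := Real.log_le_log hc0 hcL
    unfold F; unfold ff; push_cast at h2; linarith
  have hA0le : A0 ≤ c*F + 2*c := by
    have h1 : Real.arctan (c/t) ≤ c/t := arctan_le_self' (by positivity)
    have h2 : 2*t*Real.arctan (c/t) ≤ 2*t*(c/t) := by nlinarith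
    have h3 : 2*t*(c/t) = 2*c := by field_simp
    unfold A0 F; unfold AA; rw [h3] at h2; linarith
  have hexp : Real.exp (-(Real.pi*t - A0 + F/2)/2)
      ≤ K * t ^ (c - 1/2) * Real.exp (-(Real.pi*t)/2) := by
    rw [Real.rpow_def_of_pos ht0, hK, ← Real.exp_add, ← Real.exp_add]
    apply Real.exp_le_exp.2
    have hcF : c*F ≤ c*(Real.log 2 + 2*Real.log t) :=
      mul_le_mul_of_nonneg_left hF1 hc0.le
    have hc2 : c*Real.log 2 ≤ L*Real.log 2 := mul_le_mul_of_nonneg_right hcL hlog2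
    nlinarith [hA0le, hF2, hcF, hc2, hcL]
  have hMc : Real.Gamma c ≤ max M 1 := by
    have := hM c ⟨hc1, hcL⟩
    have h2 : Real.Gamma c ≤ |Real.Gamma c| := le_abs_self _
    rw [Real.norm_eq_abs] at this
    exact le_trans (le_trans h2 this) (le_max_left M 1)
  calc ‖Complex.Gamma s‖
      ≤ Real.Gamma c * Real.exp (-(Real.pi*t - A0 + F/2)/2) := key
    _ ≤ (max M 1) * (K * t ^ (c - 1/2) * Real.exp (-(Real.pi*t)/2)) := by
        apply mul_le_mul hMc hexp (Real.exp_nonneg _)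
        exact le_trans zero_le_one (le_max_right M 1)
    _ = (max M 1) * K * t ^ (c - 1/2) * Real.exp (-(Real.pi*t)/2) := by ring

lemma gamma_shift (m : ℕ) (s : ℂ) (hs : ∀ j : ℕ, s + j ≠ 0) :
    Complex.Gamma (s + m) = (∏ j ∈ Finset.range m, (s + j)) * Complex.Gamma s := by
  induction m with
  | zero => simp
  | succ m ih =>
    have h1 : s + ((m:ℕ)+1 : ℕ) = (s + m) + 1 := by push_cast; ring
    rw [h1, Complex.Gamma_add_one _ (hs m), ih, Finset.prod_range_succ]
    ring

end StirlingAux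

/-- Stirling bound for the Gamma function on vertical strips. -/
theorem gamma_stirling_bound_on_strip (a b : ℝ) (hab : a ≤ b) :
    ∃ C > (0:ℝ), ∃ T > (0:ℝ), ∀ c : ℝ, a ≤ c → c ≤ b → ∀ t : ℝ, T ≤ |t| →
      ‖Complex.Gamma (c + t * Complex.I)‖
        ≤ C * |t| ^ (c - 1 / 2) * Real.exp (-(Real.pi * |t|) / 2) := by
  set m : ℕ := ⌈1 - a⌉₊ with hm
  have ham : 1 ≤ a + (m:ℝ) := by
    have := Nat.le_ceil (1 - a)
    rw [← hm] at this
    linarith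
  have hL : (1:ℝ) ≤ b + m := by linarith
  obtain ⟨C₀, hC₀, hcore⟩ := core hL
  refine ⟨C₀, hC₀, 2, by norm_num, fun c hac hcb t ht => ?_⟩
  set τ := |t| with hτ
  have hτ2 : (2:ℝ) ≤ τ := ht
  have hτ0 : (0:ℝ) < τ := by linarith
  have habs : ‖Complex.Gamma (↑c + ↑t*Complex.I)‖
      = ‖Complex.Gamma (↑c + ↑τ*Complex.I)‖ := by
    rcases abs_choice t with h | h
    · rw [hτ, h]
    · have heq : (↑c + ↑t*Complex.I : ℂ) = (starRingEnd ℂ) (↑c + ↑τ*Complex.I) := by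
        have hτt : τ = -t := by rw [hτ, h]
        apply Complex.ext
        · simp
        · simp [hτt]
      rw [heq, Complex.Gamma_conj, Complex.norm_conj]
  rw [habs]
  set s : ℂ := ↑c + ↑τ*Complex.I with hs
  have hsj : ∀ j : ℕ, s + (j:ℕ) ≠ 0 := by
    intro j h
    have := congrArg Complex.im h
    simp [hs] at this
    linarith
  have hshift := gamma_shift m s hsj
  have hP : τ^m ≤ ‖∏ j ∈ Finset.range m, (s + (j:ℕ))‖ := by
    rw [norm_prod]
    calc τ^m = ∏ _j ∈ Finset.range m, τ := by
          rw [Finset.prod_const, Finset.card_range]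
      _ ≤ ∏ j ∈ Finset.range m, ‖s+(j:ℕ)‖ := by
          apply Finset.prod_le_prod (fun _ _ => hτ0.le)
          intro j _
          have h1 : |(s + (j:ℕ)).im| ≤ ‖s+(j:ℕ)‖ := Complex.abs_im_le_norm _
          have h2 : (s + (j:ℕ)).im = τ := by simp [hs]
          rw [h2, abs_of_pos hτ0] at h1
          exact h1
  have hup := hcore (c + m) (by linarith) (by linarith) τ hτ2
  have hsm : s + (m:ℂ) = (↑(c + (m:ℕ) : ℝ) + ↑τ*Complex.I : ℂ) := by
    rw [hs]; push_cast; ring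
  have h1 : ‖Complex.Gamma s‖ * τ^m
      ≤ C₀ * τ ^ (c + (m:ℝ) - 1/2) * Real.exp (-(Real.pi*τ)/2) := by
    calc ‖Complex.Gamma s‖ * τ^m
        ≤ ‖Complex.Gamma s‖ * ‖∏ j ∈ Finset.range m, (s + (j:ℕ))‖ :=
          mul_le_mul_of_nonneg_left hP (norm_nonneg _)
      _ = ‖Complex.Gamma (s + (m:ℕ))‖ := by rw [hshift, norm_mul]; ring
      _ ≤ C₀ * τ ^ (c + (m:ℝ) - 1/2) * Real.exp (-(Real.pi*τ)/2) := by
          rw [show (s + ((m:ℕ):ℂ)) = (↑(c + (m:ℕ) : ℝ) + ↑τ*Complex.I : ℂ) from hsm]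
          convert hup using 3 <;> push_cast <;> ring
  have hexp : τ ^ (c + (m:ℝ) - 1/2) = τ ^ (c - 1/2) * τ^m := by
    rw [← Real.rpow_natCast τ m, ← Real.rpow_add hτ0]
    congr 1
    ring
  rw [hexp] at h1
  have h2 : ‖Complex.Gamma s‖ * τ^m
      ≤ (C₀ * τ ^ (c - 1/2) * Real.exp (-(Real.pi*τ)/2)) * τ^m := by
    calc ‖Complex.Gamma s‖ * τ^m
        ≤ C₀ * (τ ^ (c - 1/2) * τ^m) * Real.exp (-(Real.pi*τ)/2) := h1
      _ = (C₀ * τ ^ (c - 1/2) * Real.exp (-(Real.pi*τ)/2)) * τ^m := by ring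
  exact le_of_mul_le_mul_right h2 (pow_pos hτ0 m)

end
end

section
/- Let n ≥ 1 and let p, q be non-negative integers with p + q ≥ 1. For c ∈ (0, n+1) and x > 0, the integral I_c(x) := (1/2π) ∫_ℝ Γ(c+it)^p · Γ(1+n−c−it)^q · x^{−(c+it)} dt is absolutely convergent, and its value is independent of c: for all c_1, c_2 ∈ (0, n+1) and all x > 0, I_{c_1}(x) = I_{c_2}(x). -/
open MeasureTheory Filter Set

noncomputable section

section interpAux
open Topology

set_option maxHeartbeats 1000000

lemma norm_Gamma_le_Gamma_re {s : ℂ} (hs : 0 < s.re) :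
    ‖Complex.Gamma s‖ ≤ Real.Gamma s.re := by
  rw [Complex.Gamma_eq_integral hs, Real.Gamma_eq_integral hs, Complex.GammaIntegral]
  refine (norm_integral_le_integral_norm _).trans (le_of_eq ?_)
  refine setIntegral_congr_fun measurableSet_Ioi fun x hx => ?_
  rw [norm_mul,
    Complex.norm_cpow_eq_rpow_re_of_pos hx]
  simp [abs_of_pos (Real.exp_pos _), Complex.sub_re, Complex.norm_exp]

lemma norm_Gamma_le_div {s : ℂ} (hs : 0 < s.re) :
    ‖Complex.Gamma s‖ ≤ Real.Gamma (s.re + 2) / (s.re ^ 2 + s.im ^ 2) := by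
  have h0 : s ≠ 0 := fun h => by simp [h] at hs
  have h1 : s + 1 ≠ 0 := fun h => by
    have := congrArg Complex.re h; simp at this; linarith
  have hG2 : Complex.Gamma (s + 2) = (s + 1) * (s * Complex.Gamma s) := by
    have e1 : s + 2 = (s + 1) + 1 := by ring
    rw [e1, Complex.Gamma_add_one _ h1, Complex.Gamma_add_one _ h0]
  have key : ‖Complex.Gamma (s + 2)‖ ≤ Real.Gamma (s.re + 2) := by
    have := norm_Gamma_le_Gamma_re (s := s + 2) (by simp; linarith)
    simpa using this
  have hns : ‖s‖ ^ 2 = s.re ^ 2 + s.im ^ 2 := by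
    rw [Complex.sq_norm, Complex.normSq_apply]; ring
  have hle : ‖s‖ ≤ ‖s + 1‖ := by
    have : Complex.normSq s ≤ Complex.normSq (s + 1) := by
      simp only [Complex.normSq_apply, Complex.add_re, Complex.add_im, Complex.one_re,
        Complex.one_im]
      nlinarith
    simpa [Complex.norm_def] using Real.sqrt_le_sqrt this
  have hr : (0:ℝ) < s.re ^ 2 + s.im ^ 2 := by nlinarith
  rw [le_div_iff₀ hr]
  calc ‖Complex.Gamma s‖ * (s.re ^ 2 + s.im ^ 2)
      = ‖Complex.Gamma s‖ * (‖s‖ * ‖s‖) := by rw [← hns]; ring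
    _ ≤ ‖Complex.Gamma s‖ * (‖s + 1‖ * ‖s‖) :=
        mul_le_mul_of_nonneg_left (mul_le_mul_of_nonneg_right hle (norm_nonneg s)) (norm_nonneg _)
    _ = ‖(s + 1) * (s * Complex.Gamma s)‖ := by rw [norm_mul, norm_mul]; ring
    _ = ‖Complex.Gamma (s + 2)‖ := by rw [hG2]
    _ ≤ Real.Gamma (s.re + 2) := key

lemma gamma_strip_bound {a b : ℝ} (ha : 0 < a) (hab : a ≤ b) :
    ∃ C, 0 < C ∧ ∀ σ ∈ Icc a b, ∀ t : ℝ,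
      ‖Complex.Gamma (↑σ + ↑t * Complex.I)‖ ≤ C / (1 + t ^ 2) := by
  have hcont : ContinuousOn Real.Gamma (Icc (a + 2) (b + 2)) := fun y hy => by
    have hy0 : 0 < y := by have := hy.1; linarith
    exact (Real.differentiableAt_Gamma fun m => by
      have : (0:ℝ) ≤ m := Nat.cast_nonneg m
      intro h; rw [h] at hy0; linarith).continuousAt.continuousWithinAt
  obtain ⟨A, hA⟩ := isCompact_Icc.exists_bound_of_continuousOn hcont
  have hA' : ∀ y ∈ Icc (a + 2) (b + 2), Real.Gamma y ≤ A := fun y hy => by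
    have := hA y hy; rw [Real.norm_eq_abs] at this; exact (le_abs_self _).trans this
  have hA0 : 0 < A := lt_of_lt_of_le (Real.Gamma_pos_of_pos (by linarith : (0:ℝ) < a + 2))
    (hA' (a + 2) ⟨le_refl _, by linarith⟩)
  set ε := min (a ^ 2) 1 with hε
  have hε0 : 0 < ε := lt_min (by positivity) one_pos
  refine ⟨A / ε, by positivity, fun σ hσ t => ?_⟩
  have hσ0 : 0 < σ := lt_of_lt_of_le ha hσ.1
  have hre : (↑σ + ↑t * Complex.I).re = σ := by simp
  have him : (↑σ + ↑t * Complex.I).im = t := by simp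
  have h1 := norm_Gamma_le_div (s := ↑σ + ↑t * Complex.I) (by rw [hre]; exact hσ0)
  rw [hre, him] at h1
  refine h1.trans ?_
  have hb1 : Real.Gamma (σ + 2) ≤ A := hA' (σ + 2) ⟨by linarith [hσ.1], by linarith [hσ.2]⟩
  have hb2 : ε * (1 + t ^ 2) ≤ σ ^ 2 + t ^ 2 := by
    have h1' : ε ≤ a ^ 2 := min_le_left _ _
    have h2' : ε ≤ 1 := min_le_right _ _
    have : a ^ 2 ≤ σ ^ 2 := by nlinarith [hσ.1]
    nlinarith [sq_nonneg t]
  have hpos : (0:ℝ) < ε * (1 + t ^ 2) := by positivity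
  calc Real.Gamma (σ + 2) / (σ ^ 2 + t ^ 2) ≤ A / (ε * (1 + t ^ 2)) :=
        div_le_div₀ hA0.le hb1 hpos hb2
    _ = A / ε / (1 + t ^ 2) := by rw [div_div]

/-- The integrand as a function of the complex variable. -/
def gI (n p q : ℕ) (x : ℝ) (s : ℂ) : ℂ :=
  Complex.Gamma s ^ p * Complex.Gamma (1 + n - s) ^ q * cpowP x (-s)

lemma gI_diff (n p q : ℕ) (x : ℝ) {s : ℂ} (h0 : 0 < s.re) (h1 : s.re < n + 1) :
    DifferentiableAt ℂ (gI n p q x) s := by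
  have hg1 : DifferentiableAt ℂ Complex.Gamma s :=
    Complex.differentiableAt_Gamma s fun m => by
      intro h
      have : s.re = -(m : ℝ) := by rw [h]; simp
      have : (0:ℝ) ≤ (m:ℝ) := Nat.cast_nonneg m
      linarith [h0, ‹s.re = -(m:ℝ)›]
  have hg2 : DifferentiableAt ℂ (fun z => Complex.Gamma (1 + n - z)) s := by
    have hin : DifferentiableAt ℂ (fun z : ℂ => 1 + (n:ℂ) - z) s :=
      (differentiableAt_const _).sub differentiableAt_id
    refine DifferentiableAt.comp s (Complex.differentiableAt_Gamma _ fun m => ?_) hin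
    intro h
    have : (1 + (n:ℂ) - s).re = -(m : ℝ) := by rw [h]; simp
    simp only [Complex.sub_re, Complex.add_re, Complex.one_re, Complex.natCast_re] at this
    have : (0:ℝ) ≤ (m:ℝ) := Nat.cast_nonneg m
    linarith [‹(1:ℝ) + n - s.re = -(m:ℝ)›]
  have hg3 : DifferentiableAt ℂ (fun z => cpowP x (-z)) s := by
    simp only [cpowP]
    exact (differentiableAt_id.neg.mul_const _).cexp
  exact ((hg1.pow p).mul (hg2.pow q)).mul hg3

lemma gI_bound (n p q : ℕ) (hpq : 1 ≤ p + q) {x : ℝ} (hx : 0 < x) {c₁ c₂ : ℝ}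
    (h1 : 0 < c₁) (h2 : c₂ < n + 1) (h12 : c₁ ≤ c₂) :
    ∃ K, 0 < K ∧ ∀ σ ∈ Icc c₁ c₂, ∀ t : ℝ,
      ‖gI n p q x (↑σ + ↑t * Complex.I)‖ ≤ K / (1 + t ^ 2) := by
  obtain ⟨C₁, hC₁0, hC₁⟩ := gamma_strip_bound h1 h12
  obtain ⟨C₂, hC₂0, hC₂⟩ := gamma_strip_bound (a := 1 + n - c₂) (b := 1 + n - c₁)
    (by linarith) (by linarith)
  set X := max (x ^ (-c₁)) (x ^ (-c₂)) with hX
  have hX0 : 0 < X := lt_max_of_lt_left (Real.rpow_pos_of_pos hx _)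
  refine ⟨C₁ ^ p * C₂ ^ q * X, by positivity, fun σ hσ t => ?_⟩
  set s := (↑σ + ↑t * Complex.I : ℂ) with hs
  have hu : ‖Complex.Gamma s‖ ≤ C₁ / (1 + t ^ 2) := hC₁ σ hσ t
  have hv : ‖Complex.Gamma (1 + n - s)‖ ≤ C₂ / (1 + t ^ 2) := by
    have he : (1 + (n:ℂ) - s) = ↑(1 + (n:ℝ) - σ) + ↑(-t) * Complex.I := by
      rw [hs]; push_cast; ring
    have := hC₂ (1 + n - σ) ⟨by linarith [hσ.2], by linarith [hσ.1]⟩ (-t)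
    rw [he]
    simpa using this
  have ht2 : (1:ℝ) ≤ 1 + t ^ 2 := by nlinarith [sq_nonneg t]
  have hu' : ‖Complex.Gamma s‖ ≤ C₁ := hu.trans (div_le_self hC₁0.le ht2)
  have hv' : ‖Complex.Gamma (1 + n - s)‖ ≤ C₂ := hv.trans (div_le_self hC₂0.le ht2)
  have hw : ‖cpowP x (-s)‖ ≤ X := by
    have hre : ((-s) * (Real.log x : ℂ)).re = -σ * Real.log x := by
      rw [hs]; simp
    rw [cpowP, Complex.norm_exp, hre]
    have : Real.exp (-σ * Real.log x) = x ^ (-σ) := by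
      rw [Real.rpow_def_of_pos hx]; ring_nf
    rw [this]
    rcases le_total 1 x with hx1 | hx1
    · exact le_max_of_le_left (Real.rpow_le_rpow_of_exponent_le hx1 (by linarith [hσ.1]))
    · exact le_max_of_le_right (Real.rpow_le_rpow_of_exponent_ge hx hx1 (by linarith [hσ.2]))
  have hnorm : ‖gI n p q x s‖
      = ‖Complex.Gamma s‖ ^ p * ‖Complex.Gamma (1 + n - s)‖ ^ q * ‖cpowP x (-s)‖ := by
    rw [gI, norm_mul, norm_mul, norm_pow, norm_pow]
  rw [hnorm]
  cases p with
  | zero =>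
      obtain ⟨q', rfl⟩ : ∃ q', q = q' + 1 := ⟨q - 1, by omega⟩
      calc ‖Complex.Gamma s‖ ^ 0 * ‖Complex.Gamma (1 + n - s)‖ ^ (q' + 1) * ‖cpowP x (-s)‖
          = ‖Complex.Gamma s‖ ^ 0 * ‖Complex.Gamma (1 + n - s)‖ ^ q' * ‖cpowP x (-s)‖ *
            ‖Complex.Gamma (1 + n - s)‖ := by ring
        _ ≤ C₁ ^ 0 * C₂ ^ q' * X * (C₂ / (1 + t ^ 2)) := by gcongr
        _ = C₁ ^ 0 * C₂ ^ (q' + 1) * X / (1 + t ^ 2) := by ring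
  | succ p' =>
      calc ‖Complex.Gamma s‖ ^ (p' + 1) * ‖Complex.Gamma (1 + n - s)‖ ^ q * ‖cpowP x (-s)‖
          = ‖Complex.Gamma s‖ ^ p' * ‖Complex.Gamma (1 + n - s)‖ ^ q * ‖cpowP x (-s)‖ *
            ‖Complex.Gamma s‖ := by ring
        _ ≤ C₁ ^ p' * C₂ ^ q * X * (C₁ / (1 + t ^ 2)) := by gcongr
        _ = C₁ ^ (p' + 1) * C₂ ^ q * X / (1 + t ^ 2) := by ring

lemma gI_cont (n p q : ℕ) (x : ℝ) {c : ℝ} (h0 : 0 < c) (h1 : c < n + 1) :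
    Continuous (fun t : ℝ => gI n p q x (↑c + ↑t * Complex.I)) := by
  have Hcomp : Continuous ((gI n p q x) ∘ fun t : ℝ => (↑c + ↑t * Complex.I : ℂ)) := by
    rw [continuous_iff_continuousAt]
    intro t
    have hmap : Continuous (fun t : ℝ => (↑c + ↑t * Complex.I : ℂ)) :=
      continuous_const.add (Complex.continuous_ofReal.mul continuous_const)
    have hre : ((c : ℂ) + (t : ℂ) * Complex.I).re = c := by simp
    have hd : ContinuousAt (gI n p q x) ((c : ℂ) + (t : ℂ) * Complex.I) :=
      (gI_diff n p q x (s := (c : ℂ) + (t : ℂ) * Complex.I)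
        (by rw [hre]; exact h0) (by rw [hre]; exact h1)).continuousAt
    exact ContinuousAt.comp hd hmap.continuousAt
  exact Hcomp.congr fun t => rfl

lemma gI_integrable (n p q : ℕ) (hpq : 1 ≤ p + q) {x : ℝ} (hx : 0 < x) {c : ℝ}
    (h0 : 0 < c) (h1 : c < n + 1) :
    Integrable (fun t : ℝ => gI n p q x (↑c + ↑t * Complex.I)) := by
  obtain ⟨K, hK0, hK⟩ := gI_bound n p q hpq hx h0 h1 (le_refl c)
  refine Integrable.mono' (integrable_inv_one_add_sq.const_mul K)
    (gI_cont n p q x h0 h1).aestronglyMeasurable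
    (Eventually.of_forall fun t => ?_)
  have := hK c ⟨le_refl c, le_refl c⟩ t
  rwa [div_eq_mul_inv] at this

lemma gI_shift (n p q : ℕ) (hpq : 1 ≤ p + q) {x : ℝ} (hx : 0 < x) {c₁ c₂ : ℝ}
    (h0 : 0 < c₁) (h12 : c₁ ≤ c₂) (h1 : c₂ < n + 1) :
    ∫ t : ℝ, gI n p q x (↑c₁ + ↑t * Complex.I)
      = ∫ t : ℝ, gI n p q x (↑c₂ + ↑t * Complex.I) := by
  have h0₂ : 0 < c₂ := lt_of_lt_of_le h0 h12
  have h1₁ : c₁ < n + 1 := lt_of_le_of_lt h12 h1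
  have hi₁ := gI_integrable n p q hpq hx h0 h1₁
  have hi₂ := gI_integrable n p q hpq hx h0₂ h1
  obtain ⟨K, hK0, hK⟩ := gI_bound n p q hpq hx h0 h1 h12
  set f := gI n p q x with hf
  set V : ℝ → ℝ → ℂ := fun c T => ∫ t in (-T)..T, f (↑c + ↑t * Complex.I) with hV
  have ht₁ : Tendsto (fun T => V c₁ T) atTop (𝓝 (∫ t : ℝ, f (↑c₁ + ↑t * Complex.I))) :=
    intervalIntegral_tendsto_integral hi₁ tendsto_neg_atTop_atBot tendsto_id
  have ht₂ : Tendsto (fun T => V c₂ T) atTop (𝓝 (∫ t : ℝ, f (↑c₂ + ↑t * Complex.I))) :=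
    intervalIntegral_tendsto_integral hi₂ tendsto_neg_atTop_atBot tendsto_id
  have key : ∀ T : ℝ, ‖V c₁ T - V c₂ T‖ ≤ 2 * (K * |c₂ - c₁|) / (1 + T ^ 2) := by
    intro T
    have Hd : DifferentiableOn ℂ f
        (Set.uIcc (⟨c₁, -T⟩ : ℂ).re (⟨c₂, T⟩ : ℂ).re ×ℂ
          Set.uIcc (⟨c₁, -T⟩ : ℂ).im (⟨c₂, T⟩ : ℂ).im) := by
      intro s hs
      rw [Complex.mem_reProdIm] at hs
      have hre : s.re ∈ Icc c₁ c₂ := by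
        have h' := hs.1
        rwa [(rfl : (⟨c₁, -T⟩ : ℂ).re = c₁), (rfl : (⟨c₂, T⟩ : ℂ).re = c₂),
          Set.uIcc_of_le h12] at h'
      exact (gI_diff n p q x (lt_of_lt_of_le h0 hre.1)
        (lt_of_le_of_lt hre.2 h1)).differentiableWithinAt
    have hrect := Complex.integral_boundary_rect_eq_zero_of_differentiableOn f
      ⟨c₁, -T⟩ ⟨c₂, T⟩ Hd
    simp only [(rfl : (⟨c₁, -T⟩ : ℂ).re = c₁), (rfl : (⟨c₂, T⟩ : ℂ).re = c₂),
      (rfl : (⟨c₁, -T⟩ : ℂ).im = -T), (rfl : (⟨c₂, T⟩ : ℂ).im = T),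
      smul_eq_mul] at hrect
    set Bt := ∫ σ : ℝ in c₁..c₂, f (↑σ + ↑(-T) * Complex.I) with hBt
    set Tp := ∫ σ : ℝ in c₁..c₂, f (↑σ + ↑T * Complex.I) with hTp
    have hrect' : Bt - Tp + Complex.I * V c₂ T - Complex.I * V c₁ T = 0 := hrect
    have hsub : V c₁ T - V c₂ T = Complex.I * (Tp - Bt) := by
      have h2 : Complex.I * (V c₁ T - V c₂ T) = -(Tp - Bt) := by
        rw [mul_sub]; linear_combination -hrect'
      have h3 := congrArg (fun z => Complex.I * z) h2
      rw [← mul_assoc, Complex.I_mul_I] at h3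
      linear_combination -h3
    have hhoriz : ∀ t : ℝ, t ^ 2 = T ^ 2 →
        ‖∫ σ : ℝ in c₁..c₂, f (↑σ + ↑t * Complex.I)‖ ≤ K / (1 + T ^ 2) * |c₂ - c₁| := by
      intro t htt
      refine intervalIntegral.norm_integral_le_of_norm_le_const fun σ hσ => ?_
      rw [Set.uIoc_of_le h12] at hσ
      have := hK σ ⟨hσ.1.le, hσ.2⟩ t
      rwa [htt] at this
    calc ‖V c₁ T - V c₂ T‖ = ‖Tp - Bt‖ := by rw [hsub, norm_mul, Complex.norm_I, one_mul]
      _ ≤ ‖Tp‖ + ‖Bt‖ := norm_sub_le _ _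
      _ ≤ K / (1 + T ^ 2) * |c₂ - c₁| + K / (1 + T ^ 2) * |c₂ - c₁| := by
          gcongr
          · exact hhoriz T rfl
          · exact hhoriz (-T) (by ring)
      _ = 2 * (K * |c₂ - c₁|) / (1 + T ^ 2) := by ring
  have hbnd : Tendsto (fun T : ℝ => 2 * (K * |c₂ - c₁|) / (1 + T ^ 2)) atTop (𝓝 0) :=
    Tendsto.div_atTop tendsto_const_nhds
      (tendsto_atTop_add_const_left _ 1 (tendsto_pow_atTop two_ne_zero))
  have hzero : Tendsto (fun T => V c₁ T - V c₂ T) atTop (𝓝 0) :=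
    squeeze_zero_norm key hbnd
  have := tendsto_nhds_unique (ht₁.sub ht₂) hzero
  exact sub_eq_zero.mp this

lemma gI_key (n p q : ℕ) (x : ℝ) (c : ℝ) :
    (fun t : ℝ =>
        Complex.Gamma ((c : ℂ) + t * Complex.I) ^ p *
          Complex.Gamma (1 + (n : ℂ) - c - t * Complex.I) ^ q *
          cpowP x (-((c : ℂ) + t * Complex.I)))
      = fun t : ℝ => gI n p q x ((c : ℂ) + (t : ℂ) * Complex.I) := by
  funext t
  rw [gI, show (1 : ℂ) + (n : ℂ) - ((c : ℂ) + (t : ℂ) * Complex.I)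
    = 1 + (n : ℂ) - c - t * Complex.I from by ring]

end interpAux

/-- the contour integral defining the interpolating weight is absolutely
convergent and independent of the choice of `c ∈ (0, n+1)`. -/
theorem interpolating_weight_integral_welldefined
    (n : ℕ) (hn : 1 ≤ n) (p q : ℕ) (hpq : 1 ≤ p + q) :
    (∀ c ∈ Set.Ioo (0:ℝ) ((n:ℝ) + 1), ∀ x : ℝ, 0 < x →
      Integrable (fun t : ℝ =>
        Complex.Gamma ((c : ℂ) + t * Complex.I) ^ p *
          Complex.Gamma (1 + (n : ℂ) - c - t * Complex.I) ^ q *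
          cpowP x (-((c : ℂ) + t * Complex.I)))) ∧
    ∀ c₁ ∈ Set.Ioo (0:ℝ) ((n:ℝ) + 1), ∀ c₂ ∈ Set.Ioo (0:ℝ) ((n:ℝ) + 1), ∀ x : ℝ, 0 < x →
      (1 / (2 * (Real.pi : ℂ))) * (∫ t : ℝ,
          Complex.Gamma ((c₁ : ℂ) + t * Complex.I) ^ p *
            Complex.Gamma (1 + (n : ℂ) - c₁ - t * Complex.I) ^ q *
            cpowP x (-((c₁ : ℂ) + t * Complex.I)))
        = (1 / (2 * (Real.pi : ℂ))) * ∫ t : ℝ,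
            Complex.Gamma ((c₂ : ℂ) + t * Complex.I) ^ p *
              Complex.Gamma (1 + (n : ℂ) - c₂ - t * Complex.I) ^ q *
              cpowP x (-((c₂ : ℂ) + t * Complex.I)) := by
  constructor
  · intro c hc x hx
    rw [gI_key n p q x c]
    exact gI_integrable n p q hpq hx hc.1 hc.2
  · intro c₁ hc₁ c₂ hc₂ x hx
    congr 1
    rw [gI_key n p q x c₁, gI_key n p q x c₂]
    rcases le_total c₁ c₂ with h | h
    · exact gI_shift n p q hpq hx hc₁.1 h hc₂.2
    · exact (gI_shift n p q hpq hx hc₂.1 h hc₁.2).symm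


end
end

section
/- Let n ≥ 1, fix c ∈ (0, n+1), and for non-negative integers p, q with p + q ≥ 1 define w^{(p,q)}(x) := (1/2π) ∫_ℝ Γ(c+it)^p · Γ(1+n−c−it)^q · x^{−(c+it)} dt for x > 0 (an absolutely convergent integral). Then for all non-negative integers p_1, q_1, p_2, q_2 with p_1 + q_1 ≥ 1 and p_2 + q_2 ≥ 1 and all x > 0, the multiplicative convolution satisfies (w^{(p_1,q_1)} ⊛ w^{(p_2,q_2)})(x) = w^{(p_1+p_2, q_1+q_2)}(x). -/
open MeasureTheory Filter Set

noncomputable section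

/-- The interpolating weight `w^{(p,q)}(x)` for a fixed contour abscissa `c`. -/
def interpW (n : ℕ) (c : ℝ) (p q : ℕ) (x : ℝ) : ℂ :=
  (1 / (2 * (Real.pi : ℂ))) * ∫ t : ℝ,
    Complex.Gamma ((c : ℂ) + t * Complex.I) ^ p *
      Complex.Gamma (1 + (n : ℂ) - c - t * Complex.I) ^ q *
      cpowP x (-((c : ℂ) + t * Complex.I))

open Complex
open scoped FourierTransform Real Convolution

lemma norm_Gamma_le {z : ℂ} (hz : 0 < z.re) : ‖Complex.Gamma z‖ ≤ Real.Gamma z.re := by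
  rw [Complex.Gamma_eq_integral hz, Complex.GammaIntegral, Real.Gamma_eq_integral hz]
  refine (norm_integral_le_integral_norm _).trans_eq ?_
  refine setIntegral_congr_fun measurableSet_Ioi (fun x hx => ?_)
  rw [norm_mul, Complex.norm_real, Real.norm_eq_abs,
    Complex.norm_cpow_eq_rpow_re_of_pos hx, Complex.sub_re,
    Complex.one_re, abs_of_pos (Real.exp_pos _)]

lemma Gamma_reduction {z : ℂ} (h0 : z ≠ 0) (h1 : z + 1 ≠ 0) :
    Complex.Gamma z = Complex.Gamma (z + 2) / (z * (z + 1)) := by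
  have h2 : z + 2 = (z + 1) + 1 := by ring
  rw [h2, Complex.Gamma_add_one _ h1, Complex.Gamma_add_one _ h0]
  field_simp

lemma sq_im_mul_norm_Gamma_le {z : ℂ} (hz : 0 < z.re) :
    z.im ^ 2 * ‖Complex.Gamma z‖ ≤ Real.Gamma (z.re + 2) := by
  rcases eq_or_ne z.im 0 with h | h
  · rw [h]
    simpa using (Real.Gamma_pos_of_pos (by linarith)).le
  · have h0 : z ≠ 0 := fun hh => h (by simp [hh])
    have h1 : z + 1 ≠ 0 := by
      intro hh
      apply h
      have := congrArg Complex.im hh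
      simpa using this
    rw [Gamma_reduction h0 h1, norm_div, norm_mul]
    have him : |z.im| ≤ ‖z‖ := Complex.abs_im_le_norm z
    have him1 : |z.im| ≤ ‖z + 1‖ := by
      have : (z+1).im = z.im := by simp
      simpa [this] using Complex.abs_im_le_norm (z + 1)
    have hpos : (0:ℝ) < |z.im| := abs_pos.mpr h
    have hG : ‖Complex.Gamma (z + 2)‖ ≤ Real.Gamma (z.re + 2) := by
      have : (z + 2).re = z.re + 2 := by simp
      simpa [this] using norm_Gamma_le (z := z + 2) (by simp; linarith)
    have hge : z.im ^ 2 ≤ ‖z‖ * ‖z + 1‖ := by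
      calc z.im ^ 2 = |z.im| * |z.im| := by rw [← _root_.sq_abs z.im]; ring
      _ ≤ ‖z‖ * ‖z + 1‖ := mul_le_mul him him1 hpos.le (norm_nonneg _)
    have hzpos : 0 < ‖z‖ * ‖z + 1‖ := by
      apply mul_pos (norm_pos_iff.mpr h0) (norm_pos_iff.mpr h1)
    rw [mul_div_assoc']
    rw [div_le_iff₀ hzpos]
    calc z.im ^ 2 * ‖Complex.Gamma (z+2)‖ ≤ (‖z‖ * ‖z+1‖) * Real.Gamma (z.re + 2) := by
          apply mul_le_mul hge hG (norm_nonneg _) hzpos.le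
    _ = Real.Gamma (z.re + 2) * (‖z‖ * ‖z + 1‖) := by ring

/-- Combined decay bound on vertical lines. -/
lemma norm_Gamma_mul_le {z : ℂ} (hz : 0 < z.re) :
    ‖Complex.Gamma z‖ * (1 + z.im ^ 2) ≤ Real.Gamma z.re + Real.Gamma (z.re + 2) := by
  have h1 := norm_Gamma_le hz
  have h2 := sq_im_mul_norm_Gamma_le hz
  nlinarith [norm_nonneg (Complex.Gamma z)]

/-- The product of Gamma factors on the vertical lines `Re = a` and `Re = b`. -/
def Gf (a b : ℝ) (p q : ℕ) : ℝ → ℂ := fun τ =>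
  Complex.Gamma ((a:ℂ) + (2*π*τ : ℝ)*Complex.I) ^ p *
    Complex.Gamma ((b:ℂ) - (2*π*τ:ℝ)*Complex.I) ^ q

lemma continuous_Gamma_line (a : ℝ) (ha : 0 < a) :
    Continuous (fun τ : ℝ => Complex.Gamma ((a:ℂ) + (2*π*τ : ℝ)*Complex.I)) := by
  rw [continuous_iff_continuousAt]
  intro τ
  apply ContinuousAt.comp
  · apply (Complex.differentiableAt_Gamma _ ?_).continuousAt
    intro m hm
    have := congrArg Complex.re hm
    simp at this
    have : (0:ℝ) ≤ m := Nat.cast_nonneg m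
    linarith
  · fun_prop

lemma continuous_Gamma_line' (b : ℝ) (hb : 0 < b) :
    Continuous (fun τ : ℝ => Complex.Gamma ((b:ℂ) - (2*π*τ : ℝ)*Complex.I)) := by
  rw [continuous_iff_continuousAt]
  intro τ
  apply ContinuousAt.comp
  · apply (Complex.differentiableAt_Gamma _ ?_).continuousAt
    intro m hm
    have := congrArg Complex.re hm
    simp at this
    have : (0:ℝ) ≤ m := Nat.cast_nonneg m
    linarith
  · fun_prop

lemma continuous_Gf {a b : ℝ} (ha : 0 < a) (hb : 0 < b) (p q : ℕ) :
    Continuous (Gf a b p q) :=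
  ((continuous_Gamma_line a ha).pow p).mul ((continuous_Gamma_line' b hb).pow q)

lemma norm_Gamma_line_le {a : ℝ} (ha : 0 < a) (u : ℝ) :
    ‖Complex.Gamma ((a:ℂ) + (u : ℝ)*Complex.I)‖ ≤ Real.Gamma a := by
  have : ((a:ℂ) + (u:ℝ)*Complex.I).re = a := by simp
  simpa [this] using norm_Gamma_le (z := (a:ℂ) + (u:ℝ)*Complex.I) (by simp [ha])

lemma norm_Gamma_line'_le {b : ℝ} (hb : 0 < b) (u : ℝ) :
    ‖Complex.Gamma ((b:ℂ) - (u : ℝ)*Complex.I)‖ ≤ Real.Gamma b := by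
  have : ((b:ℂ) - (u:ℝ)*Complex.I).re = b := by simp
  simpa [this] using norm_Gamma_le (z := (b:ℂ) - (u:ℝ)*Complex.I) (by simp [hb])

lemma integrable_Gf {a b : ℝ} (ha : 0 < a) (hb : 0 < b) {p q : ℕ} (hpq : 1 ≤ p + q) :
    Integrable (Gf a b p q) := by
  obtain ⟨C, hC⟩ : ∃ C : ℝ, ∀ τ : ℝ, ‖Gf a b p q τ‖ ≤ C * (1 + τ ^ 2)⁻¹ := by
    have hsq : ∀ τ : ℝ, (1:ℝ) + τ ^ 2 ≤ 1 + (2*π*τ) ^ 2 := by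
      intro τ
      have hπ : (1:ℝ) ≤ (2*π)^2 := by nlinarith [Real.pi_gt_three]
      have h2 : τ^2 ≤ (2*π)^2 * τ^2 := le_mul_of_one_le_left (sq_nonneg τ) hπ
      have h3 : (2*π*τ)^2 = (2*π)^2 * τ^2 := by ring
      linarith
    rcases p with _ | p'
    · -- p = 0, q ≥ 1
      rcases q with _ | q'
      · omega
      refine ⟨(Real.Gamma b + Real.Gamma (b + 2)) * Real.Gamma b ^ q', fun τ => ?_⟩
      have hz : (0:ℝ) < ((b:ℂ) - (2*π*τ:ℝ)*Complex.I).re := by simp [hb]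
      have him : ((b:ℂ) - (2*π*τ:ℝ)*Complex.I).im = -(2*π*τ) := by simp
      have key := norm_Gamma_mul_le hz
      rw [him] at key
      simp only [neg_sq] at key
      have hre : ((b:ℂ) - (2*π*τ:ℝ)*Complex.I).re = b := by simp
      rw [hre] at key
      have hb1 : ‖Complex.Gamma ((b:ℂ) - (2*π*τ:ℝ)*Complex.I)‖
          ≤ (Real.Gamma b + Real.Gamma (b+2)) * (1 + τ^2)⁻¹ := by
        rw [← div_eq_mul_inv, le_div_iff₀ (by positivity)]
        calc ‖Complex.Gamma ((b:ℂ) - (2*π*τ:ℝ)*Complex.I)‖ * (1 + τ^2)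
            ≤ ‖Complex.Gamma ((b:ℂ) - (2*π*τ:ℝ)*Complex.I)‖ * (1 + (2*π*τ)^2) := by
              apply mul_le_mul_of_nonneg_left (hsq τ) (norm_nonneg _)
          _ ≤ Real.Gamma b + Real.Gamma (b+2) := key
      have hunf : ‖Gf a b 0 (q'+1) τ‖ = ‖Complex.Gamma ((b:ℂ) - (2*π*τ:ℝ)*Complex.I)‖ * ‖Complex.Gamma ((b:ℂ) - (2*π*τ:ℝ)*Complex.I)‖ ^ q' := by
        rw [Gf]; rw [pow_zero, one_mul, pow_succ', norm_mul, norm_pow]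
      rw [hunf]
      calc ‖Complex.Gamma ((b:ℂ) - (2*π*τ:ℝ)*Complex.I)‖ * ‖Complex.Gamma ((b:ℂ) - (2*π*τ:ℝ)*Complex.I)‖ ^ q'
          ≤ ((Real.Gamma b + Real.Gamma (b+2)) * (1 + τ^2)⁻¹) * Real.Gamma b ^ q' := by
            apply mul_le_mul hb1 (pow_le_pow_left₀ (norm_nonneg _) (norm_Gamma_line'_le hb _) _)
              (by positivity) (by positivity)
        _ = (Real.Gamma b + Real.Gamma (b + 2)) * Real.Gamma b ^ q' * (1 + τ^2)⁻¹ := by ring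
    · -- p = p' + 1
      refine ⟨(Real.Gamma a + Real.Gamma (a + 2)) * (Real.Gamma a ^ p' * Real.Gamma b ^ q),
        fun τ => ?_⟩
      have hz : (0:ℝ) < ((a:ℂ) + (2*π*τ:ℝ)*Complex.I).re := by simp [ha]
      have key := norm_Gamma_mul_le hz
      have him : ((a:ℂ) + (2*π*τ:ℝ)*Complex.I).im = 2*π*τ := by simp
      have hre : ((a:ℂ) + (2*π*τ:ℝ)*Complex.I).re = a := by simp
      rw [him, hre] at key
      have ha1 : ‖Complex.Gamma ((a:ℂ) + (2*π*τ:ℝ)*Complex.I)‖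
          ≤ (Real.Gamma a + Real.Gamma (a+2)) * (1 + τ^2)⁻¹ := by
        rw [← div_eq_mul_inv, le_div_iff₀ (by positivity)]
        calc ‖Complex.Gamma ((a:ℂ) + (2*π*τ:ℝ)*Complex.I)‖ * (1 + τ^2)
            ≤ ‖Complex.Gamma ((a:ℂ) + (2*π*τ:ℝ)*Complex.I)‖ * (1 + (2*π*τ)^2) := by
              apply mul_le_mul_of_nonneg_left (hsq τ) (norm_nonneg _)
          _ ≤ Real.Gamma a + Real.Gamma (a+2) := key
      have hunf : ‖Gf a b (p'+1) q τ‖ = ‖Complex.Gamma ((a:ℂ) + (2*π*τ:ℝ)*Complex.I)‖ * (‖Complex.Gamma ((a:ℂ) + (2*π*τ:ℝ)*Complex.I)‖ ^ p' * ‖Complex.Gamma ((b:ℂ) - (2*π*τ:ℝ)*Complex.I)‖ ^ q) := by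
        rw [Gf]; rw [pow_succ', norm_mul, norm_mul, norm_pow, norm_pow, mul_assoc]
      rw [hunf]
      calc ‖Complex.Gamma ((a:ℂ) + (2*π*τ:ℝ)*Complex.I)‖ *
            (‖Complex.Gamma ((a:ℂ) + (2*π*τ:ℝ)*Complex.I)‖ ^ p' * ‖Complex.Gamma ((b:ℂ) - (2*π*τ:ℝ)*Complex.I)‖ ^ q)
          ≤ ((Real.Gamma a + Real.Gamma (a+2)) * (1 + τ^2)⁻¹) * (Real.Gamma a ^ p' * Real.Gamma b ^ q) := by
            apply mul_le_mul ha1 ?_ (by positivity) (by positivity)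
            apply mul_le_mul (pow_le_pow_left₀ (norm_nonneg _) (norm_Gamma_line_le ha _) _)
              (pow_le_pow_left₀ (norm_nonneg _) (norm_Gamma_line'_le hb _) _) (by positivity) (by positivity)
        _ = (Real.Gamma a + Real.Gamma (a + 2)) * (Real.Gamma a ^ p' * Real.Gamma b ^ q) * (1 + τ^2)⁻¹ := by
            ring
  refine (integrable_inv_one_add_sq.const_mul C).mono'
    ((continuous_Gf ha hb p q).aestronglyMeasurable) (ae_of_all _ fun τ => ?_)
  simpa using hC τ

private lemma exp_deriv_aux : ∀ x ∈ (univ : Set ℝ), HasDerivWithinAt Real.exp (Real.exp x) univ x :=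
  fun x _ => (Real.hasDerivAt_exp x).hasDerivWithinAt

private lemma exp_image_aux : Real.exp '' univ = Ioi 0 := by
  rw [image_univ, Real.range_exp]

private lemma exp_injOn_aux : InjOn Real.exp univ := Real.exp_injective.injOn

lemma integral_Ioi_comp_exp (f : ℝ → ℂ) :
    ∫ x in Ioi (0:ℝ), f x = ∫ u : ℝ, Real.exp u • f (Real.exp u) := by
  rw [← exp_image_aux, integral_image_eq_integral_abs_deriv_smul MeasurableSet.univ
    exp_deriv_aux exp_injOn_aux]
  rw [Measure.restrict_univ]
  congr 1 with u
  rw [abs_of_pos (Real.exp_pos u)]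

lemma integrableOn_Ioi_comp_exp_iff (f : ℝ → ℂ) :
    IntegrableOn f (Ioi (0:ℝ)) ↔ Integrable (fun u : ℝ => Real.exp u • f (Real.exp u)) := by
  rw [← exp_image_aux, integrableOn_image_iff_integrableOn_abs_deriv_smul MeasurableSet.univ
    exp_deriv_aux exp_injOn_aux]
  rw [integrableOn_univ]
  have h : (fun u : ℝ => |Real.exp u| • f (Real.exp u))
      = fun u : ℝ => Real.exp u • f (Real.exp u) := by
    funext u; rw [abs_of_pos (Real.exp_pos u)]
  rw [h]

/-- Base function whose Fourier transform is `Γ(c - 2πiτ)`. -/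
def Ef (c : ℝ) : ℝ → ℂ := fun u => (Real.exp (c * u - Real.exp u) : ℂ)

lemma continuous_Ef (c : ℝ) : Continuous (Ef c) := by
  unfold Ef; fun_prop

lemma Ef_eq_smul (c : ℝ) (u : ℝ) :
    Real.exp u • ((Real.exp (-Real.exp u) : ℂ) * (Real.exp u : ℂ) ^ ((c:ℂ) - 1)) = Ef c u := by
  have h2 : ((Real.exp u : ℝ) : ℂ) ^ ((c:ℂ) - 1) = Complex.exp (↑u * ((c:ℂ) - 1)) := by
    rw [Complex.ofReal_exp, Complex.cpow_def_of_ne_zero (Complex.exp_ne_zero _),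
      Complex.log_exp (by rw [Complex.ofReal_im]; linarith [Real.pi_pos])
        (by rw [Complex.ofReal_im]; linarith [Real.pi_pos])]
  rw [h2, Ef, Complex.real_smul]
  simp only [Complex.ofReal_exp]
  rw [← Complex.exp_add, ← Complex.exp_add]
  congr 1
  push_cast
  ring

lemma integrable_Ef {c : ℝ} (hc : 0 < c) : Integrable (Ef c) := by
  have h := Complex.GammaIntegral_convergent (s := (c:ℂ)) (by simpa using hc)
  rw [integrableOn_Ioi_comp_exp_iff] at h
  exact h.congr (ae_of_all _ fun u => by simpa using Ef_eq_smul c u)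

lemma smul_Gamma_integrand (s : ℂ) (u : ℝ) :
    Real.exp u • ((Real.exp (-Real.exp u) : ℂ) * (Real.exp u : ℂ) ^ (s - 1)) =
      Complex.exp (s * u - Real.exp u) := by
  have h2 : ((Real.exp u : ℝ) : ℂ) ^ (s - 1) = Complex.exp (↑u * (s - 1)) := by
    rw [Complex.ofReal_exp, Complex.cpow_def_of_ne_zero (Complex.exp_ne_zero _),
      Complex.log_exp (by rw [Complex.ofReal_im]; linarith [Real.pi_pos])
        (by rw [Complex.ofReal_im]; linarith [Real.pi_pos])]
  rw [h2, Complex.real_smul]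
  simp only [Complex.ofReal_exp]
  rw [← Complex.exp_add, ← Complex.exp_add]
  congr 1
  push_cast
  ring

/-- Gamma factor on the line `Re = a`, as a function of `τ` (with `2πτ` scaling). -/
def GA (a : ℝ) : ℝ → ℂ := fun τ => Complex.Gamma ((a:ℂ) + (2*π*τ:ℝ)*Complex.I)

/-- Gamma factor on the line `Re = b`, conjugate direction. -/
def GB (b : ℝ) : ℝ → ℂ := fun τ => Complex.Gamma ((b:ℂ) - (2*π*τ:ℝ)*Complex.I)

lemma fourier_Ef {b : ℝ} (hb : 0 < b) (τ : ℝ) :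
    𝓕 (Ef b) τ = GB b τ := by
  have hre : (0:ℝ) < ((b:ℂ) - (2*π*τ:ℝ)*Complex.I).re := by simp [hb]
  rw [GB, Complex.Gamma_eq_integral hre, Complex.GammaIntegral, integral_Ioi_comp_exp,
    Real.fourier_eq']
  simp only [RCLike.inner_apply, conj_trivial]
  congr 1
  funext u
  rw [smul_Gamma_integrand, smul_eq_mul, Ef, Complex.ofReal_exp, ← Complex.exp_add]
  congr 1
  push_cast
  ring

lemma fourier_EfNeg {a : ℝ} (ha : 0 < a) (τ : ℝ) :
    𝓕 (fun u => Ef a (-u)) τ = GA a τ := by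
  rw [← Real.fourierInv_eq_fourier_comp_neg,
    Real.fourierInv_eq_fourier_neg, fourier_Ef ha]
  rw [GA, GB]
  congr 2
  push_cast
  ring

lemma cont_fourier {f : ℝ → ℂ} (hf : Integrable f) : Continuous (𝓕 f) :=
  VectorFourier.fourierIntegral_continuous Real.continuous_fourierChar continuous_inner hf

/-- A function is *nice* if it is continuous, integrable, with integrable Fourier transform. -/
def NiceFn (G : ℝ → ℂ) : Prop := Continuous G ∧ Integrable G ∧ Integrable (𝓕 G)

lemma fourier_inv_apply {G : ℝ → ℂ} (hc : Continuous G) (hi : Integrable G)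
    (hf : Integrable (𝓕 G)) (τ : ℝ) :
    ∫ u : ℝ, Complex.exp ((↑(2 * π * (u * τ)) : ℂ) * Complex.I) • 𝓕 G u = G τ := by
  have h := hi.fourierInv_fourier_eq hf hc.continuousAt (v := τ)
  rw [Real.fourierInv_eq'] at h
  simp only [RCLike.inner_apply, conj_trivial] at h
  simp only [mul_comm τ] at h
  exact_mod_cast h

lemma conv_fourier {G₁ G₂ : ℝ → ℂ} (h₁c : Continuous G₁) (h₁i : Integrable G₁)
    (h₂c : Continuous G₂) (h₂i : Integrable G₂) (h₂f : Integrable (𝓕 G₂)) (v : ℝ) :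
    ∫ u : ℝ, 𝓕 G₁ (v - u) * 𝓕 G₂ u = 𝓕 (fun τ => G₁ τ * G₂ τ) v := by
  have hG2cont := cont_fourier h₂i
  have step1 : ∀ u : ℝ, 𝓕 G₁ (v - u) * 𝓕 G₂ u
      = ∫ τ : ℝ, Complex.exp ((↑(-2 * π * (τ * (v - u))) : ℂ) * Complex.I) * G₁ τ * 𝓕 G₂ u := by
    intro u
    rw [Real.fourier_eq']
    simp only [RCLike.inner_apply, conj_trivial, smul_eq_mul]
    rw [← integral_mul_const]
    simp only [mul_comm (v - u)]
  simp_rw [step1]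
  have hInt : Integrable (Function.uncurry fun (u τ : ℝ) =>
      Complex.exp ((↑(-2 * π * (τ * (v - u))) : ℂ) * Complex.I) * G₁ τ * 𝓕 G₂ u)
      (volume.prod volume) := by
    have hbd : Integrable (fun z : ℝ × ℝ => ‖𝓕 G₂ z.1‖ * ‖G₁ z.2‖) (volume.prod volume) :=
      h₂f.norm.mul_prod h₁i.norm
    refine hbd.mono' ?_ (ae_of_all _ fun z => ?_)
    · apply Continuous.aestronglyMeasurable
      refine Continuous.mul (Continuous.mul ?_ (h₁c.comp continuous_snd))
        (hG2cont.comp continuous_fst)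
      exact Complex.continuous_exp.comp ((Complex.continuous_ofReal.comp (by fun_prop)).mul
        continuous_const)
    · rw [Function.uncurry_def]
      simp only [norm_mul, Complex.norm_exp_ofReal_mul_I, one_mul]
      rw [mul_comm]
  rw [integral_integral_swap hInt, Real.fourier_eq']
  simp only [RCLike.inner_apply, conj_trivial, smul_eq_mul]
  congr 1
  funext τ
  have hsplit : ∀ u : ℝ, Complex.exp ((↑(-2 * π * (τ * (v - u))) : ℂ) * Complex.I)
      = Complex.exp ((↑(-2 * π * (τ * v)) : ℂ) * Complex.I) *
          Complex.exp ((↑(2 * π * (u * τ)) : ℂ) * Complex.I) := by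
    intro u
    rw [← Complex.exp_add]
    congr 1
    push_cast
    ring
  have h1 : (∫ u : ℝ, Complex.exp ((↑(-2 * π * (τ * (v - u))) : ℂ) * Complex.I) * G₁ τ * 𝓕 G₂ u)
      = (Complex.exp ((↑(-2 * π * (τ * v)) : ℂ) * Complex.I) * G₁ τ) *
        ∫ u : ℝ, Complex.exp ((↑(2 * π * (u * τ)) : ℂ) * Complex.I) • 𝓕 G₂ u := by
    rw [← integral_const_mul]
    congr 1
    funext u
    rw [smul_eq_mul, hsplit u]
    ring
  rw [h1, fourier_inv_apply h₂c h₂i h₂f τ]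
  ring

lemma NiceFn.mul {G₁ G₂ : ℝ → ℂ} (h₁ : NiceFn G₁) (h₂ : NiceFn G₂) :
    NiceFn (fun τ => G₁ τ * G₂ τ) := by
  obtain ⟨h₁c, h₁i, h₁f⟩ := h₁
  obtain ⟨h₂c, h₂i, h₂f⟩ := h₂
  have hbdd : ∀ τ, ‖G₂ τ‖ ≤ ∫ u, ‖𝓕 G₂ u‖ := by
    intro τ
    rw [← h₂i.fourierInv_fourier_eq h₂f h₂c.continuousAt (v := τ)]
    exact VectorFourier.norm_fourierIntegral_le_integral_norm _ _ _ _ _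
  refine ⟨h₁c.mul h₂c, ?_, ?_⟩
  · exact (h₁i.bdd_mul h₂c.aestronglyMeasurable (ae_of_all _ hbdd)).congr
      (ae_of_all _ fun x => mul_comm _ _)
  · have key : 𝓕 (fun τ => G₁ τ * G₂ τ) = fun v => ∫ u, 𝓕 G₁ (v - u) * 𝓕 G₂ u :=
      funext fun v => (conv_fourier h₁c h₁i h₂c h₂i h₂f v).symm
    rw [key]
    have hconv : Integrable (convolution (𝓕 G₂) (𝓕 G₁) (ContinuousLinearMap.mul ℂ ℂ) volume) :=
      h₂f.integrable_convolution (ContinuousLinearMap.mul ℂ ℂ) h₁f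
    refine hconv.congr (ae_of_all _ fun v => ?_)
    rw [convolution_def]
    congr 1
    funext u
    simp only [ContinuousLinearMap.mul_apply']
    ring

lemma nice_GA {a : ℝ} (ha : 0 < a) : NiceFn (GA a) := by
  have hA : GA a = 𝓕 (fun u => Ef a (-u)) := funext fun τ => (fourier_EfNeg ha τ).symm
  have hEc : Continuous (fun u => Ef a (-u)) := (continuous_Ef a).comp continuous_neg
  have hEi : Integrable (fun u => Ef a (-u)) := (integrable_Ef ha).comp_neg
  have hGi : Integrable (GA a) := by
    refine (integrable_Gf ha ha (p := 1) (q := 0) (by norm_num)).congr (ae_of_all _ fun τ => ?_)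
    simp [Gf, GA]
  refine ⟨continuous_Gamma_line a ha, hGi, ?_⟩
  have hFi : Integrable (𝓕 (fun u => Ef a (-u))) := by rw [← hA]; exact hGi
  rw [hA]
  have h2 : 𝓕 (𝓕 (fun u => Ef a (-u))) = fun u : ℝ => Ef a u := by
    funext u
    have h3 := hEi.fourierInv_fourier_eq hFi hEc.continuousAt (v := -u)
    rw [Real.fourierInv_eq_fourier_neg] at h3
    simpa using h3
  rw [h2]
  exact integrable_Ef ha

lemma nice_GB {b : ℝ} (hb : 0 < b) : NiceFn (GB b) := by
  have hB : GB b = 𝓕 (Ef b) := funext fun τ => (fourier_Ef hb τ).symm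
  have hGi : Integrable (GB b) := by
    refine (integrable_Gf hb hb (p := 0) (q := 1) (by norm_num)).congr (ae_of_all _ fun τ => ?_)
    simp [Gf, GB]
  refine ⟨continuous_Gamma_line' b hb, hGi, ?_⟩
  have hFi : Integrable (𝓕 (Ef b)) := by rw [← hB]; exact hGi
  rw [hB]
  have h2 : 𝓕 (𝓕 (Ef b)) = fun u : ℝ => Ef b (-u) := by
    funext u
    have h3 := (integrable_Ef hb).fourierInv_fourier_eq hFi (continuous_Ef b).continuousAt (v := -u)
    rw [Real.fourierInv_eq_fourier_neg] at h3
    simpa using h3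
  rw [h2]
  exact (integrable_Ef hb).comp_neg

lemma nice_Gf {a b : ℝ} (ha : 0 < a) (hb : 0 < b) :
    ∀ N p q : ℕ, p + q = N + 1 → NiceFn (Gf a b p q) := by
  intro N
  induction N with
  | zero =>
    intro p q hpq
    rcases p with _ | p'
    · have hq : q = 1 := by omega
      subst hq
      have h : Gf a b 0 1 = GB b := by funext τ; simp [Gf, GB]
      rw [h]; exact nice_GB hb
    · have hp : p' = 0 := by omega
      have hq : q = 0 := by omega
      subst hp; subst hq
      have h : Gf a b 1 0 = GA a := by funext τ; simp [Gf, GA]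
      rw [h]; exact nice_GA ha
  | succ N ih =>
    intro p q hpq
    rcases p with _ | p'
    · rcases q with _ | q'
      · omega
      · have h : Gf a b 0 (q'+1) = fun τ => GB b τ * Gf a b 0 q' τ := by
          funext τ; rw [Gf, Gf, GB, pow_succ']; ring
        rw [h]; exact (nice_GB hb).mul (ih 0 q' (by omega))
    · have h : Gf a b (p'+1) q = fun τ => GA a τ * Gf a b p' q τ := by
        funext τ; rw [Gf, Gf, GA, pow_succ']; ring
      rw [h]; exact (nice_GA ha).mul (ih p' q (by omega))

lemma Gf_mul {a b : ℝ} (p₁ q₁ p₂ q₂ : ℕ) (τ : ℝ) :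
    Gf a b p₁ q₁ τ * Gf a b p₂ q₂ τ = Gf a b (p₁ + p₂) (q₁ + q₂) τ := by
  simp only [Gf, pow_add]
  ring




lemma interpW_eq (n : ℕ) {c : ℝ} (p q : ℕ) {x : ℝ} (hx : 0 < x) :
    interpW n c p q x
      = Complex.exp (-((c : ℂ) * Real.log x)) *
          𝓕 (Gf c ((n:ℝ) + 1 - c) p q) (Real.log x) := by
  set L := Real.log x with hL
  set b : ℝ := (n:ℝ) + 1 - c with hb
  set g : ℝ → ℂ := fun t => Complex.Gamma ((c:ℂ) + (t:ℝ)*Complex.I)^p *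
      Complex.Gamma ((b:ℂ) - (t:ℝ)*Complex.I)^q * Complex.exp ((↑(-(t*L)) : ℂ) * Complex.I)
    with hg
  have step1 : interpW n c p q x
      = (1/(2*(π:ℂ))) * (Complex.exp (-((c:ℂ)*L)) * ∫ t : ℝ, g t) := by
    rw [interpW]
    congr 1
    rw [← integral_const_mul]
    congr 1
    funext t
    rw [hg, cpowP]
    have harg : 1 + (n:ℂ) - c - t*Complex.I = (b:ℂ) - (t:ℝ)*Complex.I := by
      rw [hb]; push_cast; ring
    rw [harg]
    have hexp : Complex.exp (-((c:ℂ) + t*Complex.I) * L)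
        = Complex.exp (-((c:ℂ)*L)) * Complex.exp ((↑(-(t*L)) : ℂ) * Complex.I) := by
      rw [← Complex.exp_add]; congr 1; push_cast; ring
    rw [← hL, hexp]
    ring
  have step2 : ∫ τ : ℝ, g (2*π*τ) = ((2*π)⁻¹ : ℝ) • ∫ t : ℝ, g t := by
    rw [MeasureTheory.Measure.integral_comp_mul_left g (2*π)]
    congr 1
    rw [abs_of_pos (by positivity)]
  have step3 : 𝓕 (Gf c b p q) L = ∫ τ : ℝ, g (2*π*τ) := by
    rw [Real.fourier_eq']
    simp only [RCLike.inner_apply, conj_trivial, smul_eq_mul]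
    congr 1
    funext τ
    simp only [hg, Gf]
    have h5 : (↑(-(2*π*τ*L)) : ℂ) = (↑(-2*π*(τ*L)) : ℂ) := by push_cast; ring
    rw [h5]
    ring
  rw [step1, step3, step2, Complex.real_smul]
  have hπ : (π:ℂ) ≠ 0 := by exact_mod_cast Real.pi_ne_zero
  push_cast
  field_simp

/-- the interpolating weights form a semigroup under multiplicative
convolution: `w^{(p₁,q₁)} ⊛ w^{(p₂,q₂)} = w^{(p₁+p₂,q₁+q₂)}`. -/
theorem interpW_mconv
    (n : ℕ) (hn : 1 ≤ n) (c : ℝ) (hc : c ∈ Set.Ioo (0:ℝ) ((n:ℝ) + 1))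
    (p₁ q₁ p₂ q₂ : ℕ) (h₁ : 1 ≤ p₁ + q₁) (h₂ : 1 ≤ p₂ + q₂) (x : ℝ) (hx : 0 < x) :
    mconvC (interpW n c p₁ q₁) (interpW n c p₂ q₂) x
      = interpW n c (p₁ + p₂) (q₁ + q₂) x := by
  obtain ⟨hc0, hc1⟩ := hc
  have hb : 0 < (n:ℝ) + 1 - c := by linarith
  obtain ⟨h₁cont, h₁int, h₁f⟩ := nice_Gf hc0 hb (p₁+q₁-1) p₁ q₁ (by omega)
  obtain ⟨h₂cont, h₂int, h₂f⟩ := nice_Gf hc0 hb (p₂+q₂-1) p₂ q₂ (by omega)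
  rw [mconvC, integral_Ioi_comp_exp]
  have hpt : ∀ v : ℝ, Real.exp v •
      (interpW n c p₁ q₁ (x / Real.exp v) * interpW n c p₂ q₂ (Real.exp v) / (Real.exp v : ℂ))
      = Complex.exp (-((c:ℂ) * Real.log x)) *
          (𝓕 (Gf c ((n:ℝ) + 1 - c) p₁ q₁) (Real.log x - v) *
            𝓕 (Gf c ((n:ℝ) + 1 - c) p₂ q₂) v) := by
    intro v
    have hxv : 0 < x / Real.exp v := div_pos hx (Real.exp_pos v)
    rw [interpW_eq n p₁ q₁ hxv, interpW_eq n p₂ q₂ (Real.exp_pos v),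
      Real.log_div hx.ne' (Real.exp_ne_zero v), Real.log_exp]
    have hne : ((Real.exp v : ℝ) : ℂ) ≠ 0 := by
      exact_mod_cast Real.exp_ne_zero v
    have hcomb : Complex.exp (-((c:ℂ) * ((Real.log x - v : ℝ) : ℂ))) *
        Complex.exp (-((c:ℂ) * (v : ℂ))) = Complex.exp (-((c:ℂ) * Real.log x)) := by
      rw [← Complex.exp_add]
      congr 1
      push_cast
      ring
    rw [Complex.real_smul, mul_comm ((Real.exp v : ℝ) : ℂ), div_mul_cancel₀ _ hne, ← hcomb]
    push_cast
    ring
  have hint2 : ∫ v : ℝ, Real.exp v •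
      (interpW n c p₁ q₁ (x / Real.exp v) * interpW n c p₂ q₂ (Real.exp v) / (Real.exp v : ℂ))
      = ∫ v : ℝ, Complex.exp (-((c:ℂ) * Real.log x)) *
          (𝓕 (Gf c ((n:ℝ) + 1 - c) p₁ q₁) (Real.log x - v) *
            𝓕 (Gf c ((n:ℝ) + 1 - c) p₂ q₂) v) := by
    congr 1
    funext v
    exact hpt v
  rw [hint2, integral_const_mul,
    conv_fourier h₁cont h₁int h₂cont h₂int h₂f (Real.log x)]
  have hmul : (fun τ => Gf c ((n:ℝ) + 1 - c) p₁ q₁ τ * Gf c ((n:ℝ) + 1 - c) p₂ q₂ τ)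
      = Gf c ((n:ℝ) + 1 - c) (p₁ + p₂) (q₁ + q₂) := funext fun τ => Gf_mul _ _ _ _ τ
  rw [hmul, ← interpW_eq n (p₁ + p₂) (q₁ + q₂) hx]

end
end

section
/- Let n ≥ 1, let p, q be non-negative integers with p + q ≥ 1, and fix c ∈ (0, n+1). Then for every x > 0, the absolutely convergent integral w^{(p,q)}(x) := (1/2π) ∫_ℝ Γ(c+it)^p · Γ(1+n−c−it)^q · x^{−(c+it)} dt is a real number and w^{(p,q)}(x) > 0. -/
open MeasureTheory Filter Set

noncomputable section

open Real Complex
open scoped FourierTransform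

namespace InterpAux


/-- base function: `gn b u = exp(-(b u) - exp(-u))`, whose Fourier transform is
`τ ↦ Γ(b + 2πτ i)`. -/
def gn (b u : ℝ) : ℝ := Real.exp (-(b*u) - Real.exp (-u))

lemma gn_pos (b u : ℝ) : 0 < gn b u := Real.exp_pos _

lemma gn_continuous (b : ℝ) : Continuous (gn b) := by
  unfold gn; fun_prop

lemma gn_le (b : ℝ) (hb : 0 ≤ b) (u : ℝ) : gn b u ≤ Real.exp (b^2) := by
  rw [gn, Real.exp_le_exp]
  set v := -u with hv
  have h1 : -(b*u) - Real.exp (-u) = b*v - Real.exp v := by rw [hv]; ring_nf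
  rw [h1]
  rcases le_or_gt v 0 with h | h
  · nlinarith [Real.exp_pos v, sq_nonneg b, mul_nonpos_of_nonneg_of_nonpos hb h]
  · have h2 : v/2 + 1 ≤ Real.exp (v/2) := Real.add_one_le_exp _
    have h3 : Real.exp (v/2) * Real.exp (v/2) = Real.exp v := by
      rw [← Real.exp_add]; ring_nf
    nlinarith [sq_nonneg (v/2 - b), Real.exp_pos (v/2)]

lemma hasDerivAt_gn (b u : ℝ) :
    HasDerivAt (gn b) (gn (b+1) u - b * gn b u) u := by
  have h1 : HasDerivAt (fun u : ℝ => -(b*u) - Real.exp (-u))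
      (-b + Real.exp (-u)) u := by
    have ha : HasDerivAt (fun u : ℝ => -(b*u)) (-b) u := by
      simpa using ((hasDerivAt_id u).const_mul (-b))
    have hb' : HasDerivAt (fun u : ℝ => Real.exp (-u)) (-Real.exp (-u)) u := by
      have h := (Real.hasDerivAt_exp (-u)).comp u (hasDerivAt_neg u)
      rw [mul_neg_one] at h
      exact h
    exact (ha.sub hb').congr_deriv (by ring)
  have := (Real.hasDerivAt_exp _).comp u h1
  refine this.congr_deriv (Eq.symm ?_)
  show gn (b+1) u - b * gn b u = Real.exp (-(b*u) - Real.exp (-u)) * (-b + Real.exp (-u))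
  rw [gn, gn]
  rw [show -((b+1)*u) - Real.exp (-u) = (-(b*u) - Real.exp (-u)) + (-u) by ring,
    Real.exp_add]
  ring

private theorem rexp_neg_deriv_aux :
    ∀ x ∈ univ, HasDerivWithinAt (rexp ∘ Neg.neg) (-rexp (-x)) univ x :=
  fun x _ ↦ mul_neg_one (rexp (-x)) ▸
    ((Real.hasDerivAt_exp (-x)).comp x (hasDerivAt_neg x)).hasDerivWithinAt

private theorem rexp_neg_image_aux : rexp ∘ Neg.neg '' univ = Ioi 0 := by
  rw [Set.image_comp, Set.image_univ_of_surjective neg_surjective, Set.image_univ, Real.range_exp]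

private theorem rexp_neg_injOn_aux : univ.InjOn (rexp ∘ Neg.neg) :=
  Real.exp_injective.injOn.comp neg_injective.injOn (univ.mapsTo_univ _)

lemma integrable_gn {b : ℝ} (hb : 0 < b) : Integrable (gn b) := by
  have h0 : IntegrableOn (fun x : ℝ => Real.exp (-x) * x ^ (b - 1)) (Ioi 0) :=
    Real.GammaIntegral_convergent hb
  rw [← rexp_neg_image_aux,
    integrableOn_image_iff_integrableOn_abs_deriv_smul MeasurableSet.univ
      rexp_neg_deriv_aux rexp_neg_injOn_aux] at h0
  rw [← integrableOn_univ]
  apply h0.congr_fun _ MeasurableSet.univ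
  intro u _
  show |(-rexp (-u))| • (Real.exp (-(rexp (-u))) * (rexp (-u)) ^ (b - 1)) = gn b u
  rw [abs_neg, abs_of_pos (Real.exp_pos _), smul_eq_mul,
    Real.rpow_def_of_pos (Real.exp_pos _), Real.log_exp, gn, ← Real.exp_add, ← Real.exp_add]
  ring_nf

def gnC (b : ℝ) : ℝ → ℂ := fun u => (gn b u : ℂ)
/-- Mellin transform of `exp(-x)` is `Γ`. -/
lemma mellin_exp {s : ℂ} (hs : 0 < s.re) :
    mellin (fun x : ℝ => (Real.exp (-x) : ℂ)) s = Complex.Gamma s := by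
  rw [Complex.Gamma_eq_integral hs, Complex.GammaIntegral, mellin]
  refine setIntegral_congr_fun measurableSet_Ioi fun x _ => ?_
  rw [smul_eq_mul]; ring

/-- Fourier transform of `gnC b` is `τ ↦ Γ(b + 2πτ i)`. -/
lemma ft_gnC {b : ℝ} (hb : 0 < b) (τ : ℝ) :
    𝓕 (gnC b) τ = Complex.Gamma ((b : ℂ) + (2*π*τ)*Complex.I) := by
  have hre : ((b : ℂ) + (2*π*τ)*Complex.I).re = b := by simp
  have him : ((b : ℂ) + (2*π*τ)*Complex.I).im = 2*π*τ := by simp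
  have h := mellin_eq_fourier (fun x : ℝ => (Real.exp (-x) : ℂ))
    (s := (b : ℂ) + (2*π*τ)*Complex.I)
  rw [mellin_exp (by rw [hre]; exact hb), hre, him] at h
  rw [show (2*π) * τ / (2*π) = τ by field_simp] at h
  rw [h]
  refine congrArg (fun F : ℝ → ℂ => 𝓕 F τ) (funext fun u => ?_)
  show ((gn b u : ℝ) : ℂ) = Real.exp (-b * u) • ((Real.exp (-(Real.exp (-u))) : ℝ) : ℂ)
  rw [Complex.real_smul, ← Complex.ofReal_mul, ← Real.exp_add, gn]
  norm_cast
  ring_nf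

lemma ft_comp_neg (f : ℝ → ℂ) (τ : ℝ) :
    𝓕 (fun u => f (-u)) τ = 𝓕 f (-τ) := by
  rw [Real.fourier_real_eq_integral_exp_smul, Real.fourier_real_eq_integral_exp_smul]
  rw [← integral_neg_eq_self (fun v => Complex.exp (↑(-2 * π * v * -τ) * Complex.I) • f v) volume]
  congr 1; funext v
  norm_num

/-- norm bound for the Fourier integral -/
lemma norm_ft_le (w : ℝ → ℂ) (ξ : ℝ) : ‖𝓕 w ξ‖ ≤ ∫ u, ‖w u‖ :=
  VectorFourier.norm_fourierIntegral_le_integral_norm _ _ _ _ _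

lemma continuous_ft {w : ℝ → ℂ} (hw : Integrable w) : Continuous (𝓕 w) :=
  VectorFourier.fourierIntegral_continuous Real.continuous_fourierChar
    (by exact continuous_inner) hw

/-- decay of the Fourier transform from two integrable derivatives -/
lemma integrable_ft_of_deriv2 {w w' w'' : ℝ → ℂ}
    (hw : Integrable w) (hw' : Integrable w') (hw'' : Integrable w'')
    (h1 : ∀ u, HasDerivAt w (w' u) u) (h2 : ∀ u, HasDerivAt w' (w'' u) u) :
    Integrable (𝓕 w) := by
  have d1 : deriv w = w' := funext fun u => (h1 u).deriv
  have d2 : deriv w' = w'' := funext fun u => (h2 u).deriv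
  have hdw : Differentiable ℝ w := fun u => (h1 u).differentiableAt
  have hdw' : Differentiable ℝ w' := fun u => (h2 u).differentiableAt
  have e1 := Real.fourier_deriv hw hdw (by rw [d1]; exact hw')
  rw [d1] at e1
  have e2 := Real.fourier_deriv hw' hdw' (by rw [d2]; exact hw'')
  rw [d2] at e2
  set C1 := ∫ u, ‖w u‖ with hC1
  set C2 := ∫ u, ‖w'' u‖ with hC2
  have hbound : ∀ ξ : ℝ, ‖𝓕 w ξ‖ ≤ (C1 + C2) * (1 + ξ^2)⁻¹ := by
    intro ξ
    have hb1 : ‖𝓕 w ξ‖ ≤ C1 := norm_ft_le w ξ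
    have hb2 : ‖𝓕 w'' ξ‖ ≤ C2 := norm_ft_le w'' ξ
    have heq : ‖𝓕 w'' ξ‖ = (2*π*|ξ|)^2 * ‖𝓕 w ξ‖ := by
      rw [e2, e1]
      simp only [norm_smul]
      rw [show ((2:ℂ) * π * Complex.I * ξ) = ((2*π*ξ : ℝ) : ℂ) * Complex.I by push_cast; ring]
      rw [norm_mul, Complex.norm_I, Complex.norm_real, Real.norm_eq_abs, mul_one]
      rw [abs_mul, abs_mul, abs_of_pos (by norm_num : (0:ℝ) < 2), abs_of_pos Real.pi_pos]
      ring
    have hpi : 1 ≤ 2*π := by nlinarith [Real.pi_gt_three]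
    have hx2 : ξ^2 * ‖𝓕 w ξ‖ ≤ C2 := by
      have hthis : (2*π*|ξ|)^2 * ‖𝓕 w ξ‖ ≤ C2 := heq ▸ hb2
      have hsq : (2*π*|ξ|)^2 = (2*π)^2 * ξ^2 := by rw [mul_pow, _root_.sq_abs]
      rw [hsq] at hthis
      have h1le : (1:ℝ) ≤ (2*π)^2 := by nlinarith
      nlinarith [mul_le_mul_of_nonneg_right h1le
        (mul_nonneg (sq_nonneg ξ) (norm_nonneg (𝓕 w ξ)))]
    have hne : (0:ℝ) < 1 + ξ^2 := by positivity
    calc ‖𝓕 w ξ‖ = (1+ξ^2) * ‖𝓕 w ξ‖ / (1+ξ^2) := by field_simp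
    _ ≤ (C1 + C2) * (1+ξ^2)⁻¹ := by
        rw [div_eq_mul_inv]
        apply mul_le_mul_of_nonneg_right _ (by positivity)
        nlinarith [norm_nonneg (𝓕 w ξ)]
  refine (integrable_inv_one_add_sq.const_mul (C1 + C2)).mono'
    ((continuous_ft hw).aestronglyMeasurable) ?_
  filter_upwards with ξ
  simpa [mul_comm] using hbound ξ


open scoped Convolution

structure GoodF (f : ℝ → ℝ) (F : ℝ → ℂ) : Prop where
  intg : Integrable f
  cont : Continuous f
  bdd : ∃ M, ∀ u, |f u| ≤ M
  pos : ∀ u, 0 < f u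
  ft : ∀ τ : ℝ, 𝓕 (fun u : ℝ => (f u : ℂ)) τ = F τ
  Fint : Integrable F

theorem GoodF.conv {f g : ℝ → ℝ} {F G : ℝ → ℂ} (hf : GoodF f F) (hg : GoodF g G) :
    GoodF (f ⋆[ContinuousLinearMap.mul ℝ ℝ, volume] g) (fun τ => F τ * G τ) := by
  obtain ⟨Mg, hMg⟩ := hg.bdd
  have hMg' : ∀ u, ‖g u‖ ≤ Mg := fun u => by rw [Real.norm_eq_abs]; exact hMg u
  have hbg : BddAbove (Set.range fun x => ‖g x‖) := by
    refine ⟨Mg, ?_⟩; rintro _ ⟨x, rfl⟩; exact hMg' x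
  have hxx : ∀ x, (f ⋆[ContinuousLinearMap.mul ℝ ℝ, volume] g) x = ∫ t, f t * g (x - t) := by
    intro x; rw [convolution_def]; simp only [ContinuousLinearMap.mul_apply']
  have hint_at : ∀ x, Integrable (fun t => f t * g (x - t)) := by
    intro x
    have h1 : Integrable (fun t => g (x - t) * f t) := by
      refine Integrable.bdd_mul hf.intg ?_ (c := Mg) (ae_of_all _ fun t => hMg' _)
      exact (hg.cont.comp (continuous_const.sub continuous_id)).aestronglyMeasurable
    exact h1.congr (Filter.Eventually.of_forall fun t => mul_comm _ _)
  have hGbdd : ∀ τ, ‖G τ‖ ≤ ∫ u, ‖(g u : ℂ)‖ := by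
    intro τ; rw [← hg.ft τ]; exact norm_ft_le _ τ
  have hGeq : G = 𝓕 (fun u : ℝ => (g u : ℂ)) := funext fun τ => (hg.ft τ).symm
  constructor
  · exact hf.intg.integrable_convolution _ hg.intg
  · exact hbg.continuous_convolution_right_of_integrable _ hf.intg hg.cont
  · -- bdd
    refine ⟨(∫ u, ‖f u‖) * Mg, fun x => ?_⟩
    rw [← Real.norm_eq_abs, hxx]
    have hb : ∀ t, ‖f t * g (x - t)‖ ≤ ‖f t‖ * Mg := fun t => by
      rw [norm_mul]
      exact mul_le_mul_of_nonneg_left (hMg' _) (norm_nonneg _)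
    calc ‖∫ t, f t * g (x - t)‖ ≤ ∫ t, ‖f t‖ * Mg :=
          norm_integral_le_of_norm_le (hf.intg.norm.mul_const Mg)
            (Filter.Eventually.of_forall hb)
    _ = (∫ u, ‖f u‖) * Mg := integral_mul_const _ _
  · -- pos
    intro x
    rw [hxx]
    refine (integral_pos_iff_support_of_nonneg
        (fun t => (mul_pos (hf.pos t) (hg.pos _)).le) (hint_at x)).mpr ?_
    have hsupp : Function.support (fun t => f t * g (x - t)) = Set.univ :=
      Set.eq_univ_of_forall fun t => (mul_pos (hf.pos t) (hg.pos _)).ne'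
    rw [hsupp]
    simp
  · -- ft
    intro τ
    have step0 : (fun u : ℝ => (((f ⋆[ContinuousLinearMap.mul ℝ ℝ, volume] g) u : ℝ) : ℂ))
        = fun u => ∫ t, ((f t : ℂ)) * ((g (u - t) : ℂ)) := by
      funext u
      rw [hxx]
      rw [show ((∫ t, f t * g (u - t) : ℝ) : ℂ) = ∫ t, (((f t * g (u - t) : ℝ)) : ℂ) from
        (integral_ofReal (𝕜 := ℂ) (f := fun t => f t * g (u - t))).symm]
      congr 1; funext t; push_cast; rfl
    rw [step0, Real.fourier_real_eq_integral_exp_smul]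
    simp_rw [smul_eq_mul, ← integral_const_mul]
    have h0 : Integrable (fun p : ℝ × ℝ => ((f p.2 : ℂ)) * ((g (p.1 - p.2) : ℂ)))
        (volume.prod volume) := by
      have := (hf.intg.ofReal (𝕜 := ℂ)).convolution_integrand
        (ContinuousLinearMap.mul ℂ ℂ) (hg.intg.ofReal (𝕜 := ℂ))
      simp only [ContinuousLinearMap.mul_apply'] at this
      exact this
    have hint : Integrable (Function.uncurry fun u t : ℝ =>
        Complex.exp (↑(-2 * π * u * τ) * Complex.I) * (((f t : ℂ)) * ((g (u - t) : ℂ))))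
        (volume.prod volume) := by
      have hasm : AEStronglyMeasurable (fun p : ℝ × ℝ =>
          Complex.exp (↑(-2 * π * p.1 * τ) * Complex.I) * (((f p.2 : ℂ)) * ((g (p.1 - p.2) : ℂ))))
          (volume.prod volume) := by
        refine AEStronglyMeasurable.mul ?_ h0.aestronglyMeasurable
        apply Continuous.aestronglyMeasurable
        fun_prop
      refine h0.norm.mono' hasm ?_
      filter_upwards with p
      rw [Function.uncurry]
      simp only [norm_mul, Complex.norm_exp_ofReal_mul_I, one_mul]
      exact le_rfl
    rw [integral_integral_swap hint]
    have inner : ∀ t : ℝ, (∫ u, Complex.exp (↑(-2 * π * u * τ) * Complex.I)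
        * (((f t : ℂ)) * ((g (u - t) : ℂ))))
        = ((f t : ℂ)) * (Complex.exp (↑(-2 * π * t * τ) * Complex.I) * G τ) := by
      intro t
      have e1 : (∫ u, Complex.exp (↑(-2 * π * u * τ) * Complex.I)
          * (((f t : ℂ)) * ((g (u - t) : ℂ))))
          = ((f t : ℂ)) * ∫ u, Complex.exp (↑(-2 * π * u * τ) * Complex.I) * ((g (u - t) : ℂ)) := by
        rw [← integral_const_mul]
        congr 1; funext u; ring
      rw [e1]
      congr 1
      have e2 := integral_add_right_eq_self (μ := volume)
        (fun u : ℝ => Complex.exp (↑(-2 * π * u * τ) * Complex.I) * ((g (u - t) : ℂ))) t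
      rw [← e2]
      have e3 : ∀ u : ℝ, Complex.exp (↑(-2 * π * (u + t) * τ) * Complex.I) * ((g (u + t - t) : ℂ))
          = Complex.exp (↑(-2 * π * t * τ) * Complex.I)
            * (Complex.exp (↑(-2 * π * u * τ) * Complex.I) * ((g u : ℂ))) := by
        intro u
        rw [show u + t - t = u by ring, ← mul_assoc, ← Complex.exp_add]
        congr 2
        push_cast
        ring
      rw [show (fun u : ℝ => Complex.exp (↑(-2 * π * (u + t) * τ) * Complex.I) * ((g (u + t - t) : ℂ)))
          = fun u : ℝ => Complex.exp (↑(-2 * π * t * τ) * Complex.I)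
            * (Complex.exp (↑(-2 * π * u * τ) * Complex.I) * ((g u : ℂ))) from funext e3]
      rw [integral_const_mul, ← hg.ft τ, Real.fourier_real_eq_integral_exp_smul]
      simp_rw [smul_eq_mul]
    simp_rw [inner]
    have e4 : (∫ t, ((f t : ℂ)) * (Complex.exp (↑(-2 * π * t * τ) * Complex.I) * G τ))
        = (∫ t, Complex.exp (↑(-2 * π * t * τ) * Complex.I) * ((f t : ℂ))) * G τ := by
      rw [← integral_mul_const]
      congr 1; funext t; ring
    rw [e4]
    congr 1
    rw [← hf.ft τ, Real.fourier_real_eq_integral_exp_smul]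
    simp_rw [smul_eq_mul]
  · -- Fint
    have h1 : Integrable (fun τ => G τ * F τ) := by
      refine Integrable.bdd_mul hf.Fint ?_ (c := ∫ u, ‖(g u : ℂ)‖) (ae_of_all _ hGbdd)
      rw [hGeq]
      exact (continuous_ft (hg.intg.ofReal (𝕜 := ℂ))).aestronglyMeasurable
    exact h1.congr (Filter.Eventually.of_forall fun τ => mul_comm _ _)

lemma goodF_gn {b : ℝ} (hb : 0 < b) :
    GoodF (gn b) (fun τ => Complex.Gamma ((b:ℂ) + (2*π*τ)*Complex.I)) := by
  have hb1 : (0:ℝ) < b + 1 := by linarith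
  have hb2 : (0:ℝ) < b + 1 + 1 := by linarith
  refine ⟨integrable_gn hb, gn_continuous b,
    ⟨Real.exp (b^2), fun u => by rw [abs_of_pos (gn_pos b u)]; exact gn_le b hb.le u⟩,
    gn_pos b, ft_gnC hb, ?_⟩
  set r' : ℝ → ℝ := fun u => gn (b+1) u - b * gn b u with hr'def
  set r'' : ℝ → ℝ := fun u =>
    (gn (b+1+1) u - (b+1) * gn (b+1) u) - b * (gn (b+1) u - b * gn b u) with hr''def
  have hr1 : ∀ u, HasDerivAt (gn b) (r' u) u := hasDerivAt_gn b
  have hr2 : ∀ u, HasDerivAt r' (r'' u) u := fun u =>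
    ((hasDerivAt_gn (b+1) u).sub ((hasDerivAt_gn b u).const_mul b))
  have hint' : Integrable r' := (integrable_gn hb1).sub ((integrable_gn hb).const_mul b)
  have hint'' : Integrable r'' :=
    ((integrable_gn hb2).sub ((integrable_gn hb1).const_mul (b+1))).sub
      (((integrable_gn hb1).sub ((integrable_gn hb).const_mul b)).const_mul b)
  have key := integrable_ft_of_deriv2 (w := gnC b)
    (w' := fun u => ((r' u : ℝ) : ℂ)) (w'' := fun u => ((r'' u : ℝ) : ℂ))
    ((integrable_gn hb).ofReal) (hint'.ofReal) (hint''.ofReal)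
    (fun u => (hr1 u).ofReal_comp) (fun u => (hr2 u).ofReal_comp)
  rwa [show 𝓕 (gnC b) = fun τ : ℝ => Complex.Gamma ((b:ℂ) + (2*π*τ)*Complex.I) from
    funext (ft_gnC hb)] at key

lemma goodF_gp {b : ℝ} (hb : 0 < b) :
    GoodF (fun u => gn b (-u)) (fun τ => Complex.Gamma ((b:ℂ) - (2*π*τ)*Complex.I)) := by
  have harg : ∀ τ : ℝ, (b:ℂ) + (2*π*(((-τ : ℝ)):ℂ))*Complex.I = (b:ℂ) - (2*π*τ)*Complex.I := by
    intro τ; push_cast; ring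
  refine ⟨(integrable_gn hb).comp_neg, (gn_continuous b).comp continuous_neg,
    ⟨Real.exp (b^2), fun u => by rw [abs_of_pos (gn_pos b _)]; exact gn_le b hb.le _⟩,
    fun u => gn_pos b _, ?_, ?_⟩
  · intro τ
    have h1 := ft_comp_neg (gnC b) τ
    have h2 : 𝓕 (fun u => (((gn b (-u) : ℝ)) : ℂ)) τ = 𝓕 (gnC b) (-τ) := h1
    rw [h2, ft_gnC hb (-τ), harg τ]
  · have h3 := (goodF_gn hb).Fint.comp_neg
    refine h3.congr (Filter.Eventually.of_forall fun τ => ?_)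
    simp only []
    rw [harg τ]

theorem exists_goodF_prod {f g : ℝ → ℝ} {F G : ℝ → ℂ} (hf : GoodF f F) (hg : GoodF g G) :
    ∀ k : ℕ, ∃ h, GoodF h (fun τ => F τ * G τ ^ k) := by
  intro k
  induction k with
  | zero => exact ⟨f, by simpa using hf⟩
  | succ k ih =>
    obtain ⟨h, hh⟩ := ih
    refine ⟨convolution h g (ContinuousLinearMap.mul ℝ ℝ) volume, ?_⟩
    have e : (fun τ => (F τ * G τ ^ k) * G τ) = fun τ => F τ * G τ ^ (k+1) := by
      funext τ; rw [pow_succ]; ring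
    exact e ▸ (hh.conv hg)

theorem exists_goodF_main {b1 b2 : ℝ} (h1 : 0 < b1) (h2 : 0 < b2) (p q : ℕ)
    (hpq : 1 ≤ p + q) :
    ∃ h, GoodF h (fun τ => Complex.Gamma ((b1:ℂ) + (2*π*τ)*Complex.I) ^ p *
      Complex.Gamma ((b2:ℂ) - (2*π*τ)*Complex.I) ^ q) := by
  set F1 : ℝ → ℂ := fun τ => Complex.Gamma ((b1:ℂ) + (2*π*τ)*Complex.I) with hF1
  set F2 : ℝ → ℂ := fun τ => Complex.Gamma ((b2:ℂ) - (2*π*τ)*Complex.I) with hF2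
  match p with
  | 0 =>
    match q with
    | 0 => omega
    | q' + 1 =>
      obtain ⟨h, hh⟩ := exists_goodF_prod (goodF_gp h2) (goodF_gp h2) q'
      refine ⟨h, ?_⟩
      have e : (fun τ => F2 τ * F2 τ ^ q') = fun τ => F1 τ ^ 0 * F2 τ ^ (q'+1) := by
        funext τ; rw [pow_zero, one_mul, pow_succ]; ring
      exact e ▸ hh
  | p' + 1 =>
    obtain ⟨hA, hhA⟩ := exists_goodF_prod (goodF_gn h1) (goodF_gn h1) p'
    have e1 : (fun τ => F1 τ * F1 τ ^ p') = fun τ => F1 τ ^ (p'+1) := by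
      funext τ; rw [pow_succ]; ring
    obtain ⟨hB, hhB⟩ := exists_goodF_prod (e1 ▸ hhA) (goodF_gp h2) q
    exact ⟨hB, hhB⟩


end InterpAux

/-- the interpolating weight is given by an absolutely convergent
integral and is a positive real number. -/
theorem interpW_pos
    (n : ℕ) (hn : 1 ≤ n) (p q : ℕ) (hpq : 1 ≤ p + q)
    (c : ℝ) (hc : c ∈ Set.Ioo (0:ℝ) ((n:ℝ) + 1)) (x : ℝ) (hx : 0 < x) :
    Integrable (fun t : ℝ =>
      Complex.Gamma ((c : ℂ) + t * Complex.I) ^ p *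
        Complex.Gamma (1 + (n : ℂ) - c - t * Complex.I) ^ q *
        cpowP x (-((c : ℂ) + t * Complex.I))) ∧
    (interpW n c p q x).im = 0 ∧ 0 < (interpW n c p q x).re := by
  obtain ⟨hc0, hc1⟩ := hc
  have h2π : (2:ℝ) * π ≠ 0 := by positivity
  set L : ℝ := Real.log x with hL
  set b2 : ℝ := (n:ℝ) + 1 - c with hb2
  have hb2pos : 0 < b2 := by rw [hb2]; linarith
  obtain ⟨h, hh⟩ := InterpAux.exists_goodF_main hc0 hb2pos p q hpq
  set H : ℝ → ℂ := fun τ => Complex.Gamma ((c:ℂ) + (2*π*τ)*Complex.I) ^ p *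
    Complex.Gamma ((b2:ℂ) - (2*π*τ)*Complex.I) ^ q with hHdef
  set Φ : ℝ → ℂ := fun τ => Complex.exp (↑(-2 * π * τ * L) * Complex.I) * H τ with hΦdef
  -- the pointwise identity
  have hW : (fun t : ℝ =>
      Complex.Gamma ((c : ℂ) + t * Complex.I) ^ p *
        Complex.Gamma (1 + (n : ℂ) - c - t * Complex.I) ^ q *
        cpowP x (-((c : ℂ) + t * Complex.I)))
      = fun t : ℝ => Complex.exp ((-(c*L) : ℝ) : ℂ) * Φ (t / (2*π)) := by
    funext t
    have h2πC : ((2:ℂ))*(π:ℂ) ≠ 0 := by exact_mod_cast h2π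
    have harg1 : (c:ℂ) + (2*π*((t/(2*π) : ℝ) : ℂ))*Complex.I = (c:ℂ) + t * Complex.I := by
      push_cast
      field_simp
    have harg2 : (b2:ℂ) - (2*π*((t/(2*π) : ℝ) : ℂ))*Complex.I
        = 1 + (n : ℂ) - c - t * Complex.I := by
      rw [hb2]
      push_cast
      field_simp
      ring
    have hcpow : cpowP x (-((c : ℂ) + t * Complex.I))
        = Complex.exp ((-(c*L) : ℝ) : ℂ)
          * Complex.exp (↑(-2 * π * (t/(2*π)) * L) * Complex.I) := by
      rw [cpowP, ← Complex.exp_add, ← hL]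
      have ht : -2 * π * (t/(2*π)) * L = -(t*L) := by field_simp
      rw [ht]
      congr 1
      push_cast
      ring
    simp only [hΦdef, hHdef, harg1, harg2, hcpow]
    ring
  -- integrability of Φ
  have hΦint : Integrable Φ := by
    refine Integrable.bdd_mul hh.Fint ?_ (c := 1) (ae_of_all _ fun τ => ?_)
    · exact (Complex.continuous_exp.comp (by fun_prop)).aestronglyMeasurable
    · simp only [Complex.norm_exp_ofReal_mul_I, le_refl]
  have hWint : Integrable (fun t : ℝ =>
      Complex.Gamma ((c : ℂ) + t * Complex.I) ^ p *
        Complex.Gamma (1 + (n : ℂ) - c - t * Complex.I) ^ q *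
        cpowP x (-((c : ℂ) + t * Complex.I))) := by
    rw [hW]
    exact (hΦint.comp_div h2π).const_mul _
  -- compute the value of interpW
  have hC : Continuous (fun u : ℝ => ((h u : ℝ) : ℂ)) := Complex.continuous_ofReal.comp hh.cont
  have hHeq : 𝓕 (fun u : ℝ => ((h u : ℝ) : ℂ)) = H := funext fun τ => hh.ft τ
  have hinv : 𝓕 (𝓕 (fun u : ℝ => ((h u : ℝ) : ℂ))) L = ((h (-L) : ℝ) : ℂ) := by
    have h1 := Real.fourierInv_eq_fourier_neg
      (𝓕 (fun u : ℝ => ((h u : ℝ) : ℂ))) (-L)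
    rw [neg_neg] at h1
    rw [← h1, Continuous.fourierInv_fourier_eq hC hh.intg.ofReal (by rw [hHeq]; exact hh.Fint)]
  have hFHL : 𝓕 H L = ((h (-L) : ℝ) : ℂ) := by rw [← hHeq]; exact hinv
  have hΦval : (∫ τ, Φ τ) = ((h (-L) : ℝ) : ℂ) := by
    rw [← hFHL, Real.fourier_real_eq_integral_exp_smul]
    congr 1
  have hπC : ((π : ℂ)) ≠ 0 := Complex.ofReal_ne_zero.mpr Real.pi_ne_zero
  have hval : interpW n c p q x = ((Real.exp (-(c*L)) * h (-L) : ℝ) : ℂ) := by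
    rw [interpW, hW, integral_const_mul,
      Measure.integral_comp_div Φ (2*π), hΦval,
      abs_of_pos (by positivity : (0:ℝ) < 2*π), Complex.real_smul]
    rw [← Complex.ofReal_exp]
    push_cast
    field_simp
  refine ⟨hWint, ?_, ?_⟩
  · rw [hval, Complex.ofReal_im]
  · rw [hval, Complex.ofReal_re]
    exact mul_pos (Real.exp_pos _) (hh.pos _)


end
end

section
/- (Transformation of a bi-orthogonal system under multiplicative convolution) Let n ≥ 1. Let q_0,…,q_{n−1} : (0,∞) → ℝ be measurable with ∫_0^∞ x^j |q_k(x)| dx < ∞ for all j, k = 0,…,n−1, let (a_{jk})_{0 ≤ j ≤ k ≤ n−1} be real coefficients with a_{kk} = 1, set p_k(x) := Σ_{j=0}^k a_{jk} x^j, and assume the bi-orthonormality ∫_0^∞ p_k(x) q_l(x) dx = δ_{kl} for all k, l = 0,…,n−1. Let ω : (0,∞) → [0,∞) be measurable, not almost everywhere zero, with M ω(j+1) := ∫_0^∞ x^j ω(x) dx finite for j = 0,…,n−1. Define p̃_k(x) := Σ_{j=0}^k (M ω(k+1) · a_{jk} / M ω(j+1)) x^j and q̃_k(x) := (ω ⊛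 q_k)(x) / M ω(k+1). Then ∫_0^∞ p̃_k(x) q̃_l(x) dx = δ_{kl} for all k, l = 0,…,n−1. -/
open MeasureTheory Filter Set

noncomputable section

/-- The moment `M ω(j+1) = ∫_0^∞ x^j ω(x) dx`. -/
def momInt (ω : ℝ → ℝ) (j : ℕ) : ℝ := ∫ x in Set.Ioi (0:ℝ), x ^ j * ω x

lemma subst_eq (ω : ℝ → ℝ) (j : ℕ) {c : ℝ} (hc : 0 < c) :
    (∫ x in Ioi (0:ℝ), x ^ j * ω (x / c)) = c ^ (j+1) * momInt ω j := by
  have h := integral_comp_mul_right_Ioi (fun t => (t * c) ^ j * ω t) 0 (inv_pos.mpr hc)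
  simp only [inv_mul_cancel_right₀ hc.ne', zero_mul, inv_inv, smul_eq_mul] at h
  simp only [div_eq_mul_inv]
  rw [h]
  have : ∀ x : ℝ, (x * c) ^ j * ω x = c ^ j * (x ^ j * ω x) := by
    intro x; rw [mul_pow]; ring
  simp only [this, integral_const_mul, momInt]
  ring

lemma subst_int (ω : ℝ → ℝ) (j : ℕ) {c : ℝ} (hc : 0 < c)
    (h : IntegrableOn (fun x : ℝ => x ^ j * ω x) (Ioi 0)) :
    IntegrableOn (fun x : ℝ => x ^ j * ω (x / c)) (Ioi 0) := by
  have h2 : IntegrableOn (fun t : ℝ => (t * c) ^ j * ω t) (Ioi 0) := by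
    have e : (fun t : ℝ => (t * c) ^ j * ω t) = fun t => c ^ j * (t ^ j * ω t) :=
      funext fun t => by rw [mul_pow]; ring
    rw [e]; exact h.const_mul (c ^ j)
  have h3 := (integrableOn_Ioi_comp_mul_right_iff (fun t => (t * c) ^ j * ω t) 0
      (inv_pos.mpr hc)).mpr (by simpa using h2)
  have e : (fun x : ℝ => x ^ j * ω (x / c)) = fun x => (x * c⁻¹ * c) ^ j * ω (x * c⁻¹) :=
    funext fun x => by rw [inv_mul_cancel_right₀ hc.ne', div_eq_mul_inv]
  rw [e]; exact h3

lemma momInt_pos (ω : ℝ → ℝ) (hω_meas : Measurable ω)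
    (hω_nonneg : ∀ x ∈ Ioi (0:ℝ), 0 ≤ ω x)
    (hω_ne : ¬ (∀ᵐ x ∂(volume.restrict (Ioi (0:ℝ))), ω x = 0))
    (j : ℕ) (hint : IntegrableOn (fun x : ℝ => x ^ j * ω x) (Ioi 0)) :
    0 < momInt ω j := by
  rw [momInt]
  have hnn : 0 ≤ᵐ[volume.restrict (Ioi (0:ℝ))] fun x => x ^ j * ω x := by
    filter_upwards [ae_restrict_mem measurableSet_Ioi] with x hx
    exact mul_nonneg (pow_nonneg (le_of_lt hx) _) (hω_nonneg x hx)
  rw [setIntegral_pos_iff_support_of_nonneg_ae hnn hint]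
  have hsub : {x : ℝ | ω x ≠ 0} ∩ Ioi 0 ⊆
      Function.support (fun x : ℝ => x ^ j * ω x) ∩ Ioi 0 := by
    rintro x ⟨hx1, hx2⟩
    exact ⟨mul_ne_zero (pow_ne_zero _ (ne_of_gt hx2)) hx1, hx2⟩
  have hne : volume.restrict (Ioi (0:ℝ)) {x : ℝ | ω x ≠ 0} ≠ 0 := by
    intro h
    rw [ae_iff] at hω_ne
    exact hω_ne (by simpa using h)
  have hmeasset : MeasurableSet {x : ℝ | ω x ≠ 0} := hω_meas (measurableSet_singleton 0).compl
  rw [Measure.restrict_apply hmeasset] at hne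
  calc (0:ENNReal) < volume ({x : ℝ | ω x ≠ 0} ∩ Ioi 0) := by
        exact pos_iff_ne_zero.mpr hne
    _ ≤ volume (Function.support (fun x : ℝ => x ^ j * ω x) ∩ Ioi 0) :=
        measure_mono hsub

lemma key (ω ql : ℝ → ℝ) (hω_meas : Measurable ω)
    (hω_nonneg : ∀ x ∈ Ioi (0:ℝ), 0 ≤ ω x) (hql : Measurable ql) (j : ℕ)
    (hωint : IntegrableOn (fun x : ℝ => x ^ j * ω x) (Ioi 0))
    (hqint : IntegrableOn (fun x : ℝ => x ^ j * |ql x|) (Ioi 0)) :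
    IntegrableOn (fun x : ℝ => x ^ j * mconvR ω ql x) (Ioi 0) ∧
      (∫ x in Ioi (0:ℝ), x ^ j * mconvR ω ql x)
        = momInt ω j * ∫ x in Ioi (0:ℝ), x ^ j * ql x := by
  set μ := volume.restrict (Ioi (0:ℝ)) with hμ
  set F : ℝ × ℝ → ℝ := fun p => p.2 ^ j * (ω (p.2 / p.1) * ql p.1 / p.1) with hF
  have hmeas : AEStronglyMeasurable F (μ.prod μ) :=
    ((measurable_snd.pow_const j).mul
      (((hω_meas.comp (measurable_snd.div measurable_fst)).mul
        (hql.comp measurable_fst)).div measurable_fst)).aestronglyMeasurable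
  have cond1 : ∀ᵐ y ∂μ, Integrable (fun x => F (y, x)) μ := by
    filter_upwards [ae_restrict_mem measurableSet_Ioi] with y hy
    have he : (fun x : ℝ => F (y, x)) = fun x => (ql y / y) * (x ^ j * ω (x / y)) :=
      funext fun x => by simp only [hF]; ring
    rw [he]
    exact (subst_int ω j hy hωint).const_mul _
  have cond2calc : ∀ y ∈ Ioi (0:ℝ),
      (∫ x, ‖F (y, x)‖ ∂μ) = momInt ω j * (y ^ j * |ql y|) := by
    intro y hy
    have h1 : (∫ x, ‖F (y, x)‖ ∂μ)
        = ∫ x in Ioi (0:ℝ), (x ^ j * ω (x / y)) * (|ql y| / y) := by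
      refine setIntegral_congr_fun measurableSet_Ioi fun x hx => ?_
      have hxy : 0 < x / y := div_pos hx hy
      simp only [hF, Real.norm_eq_abs, abs_mul, abs_div,
        abs_of_nonneg (pow_nonneg (le_of_lt (show (0:ℝ) < x from hx)) j), abs_of_nonneg (hω_nonneg _ hxy),
        abs_of_pos (show (0:ℝ) < y from hy)]
      ring
    rw [h1, integral_mul_const, subst_eq ω j hy]
    have hy0 : y ≠ 0 := ne_of_gt hy
    field_simp
    ring
  have cond2 : Integrable (fun y => ∫ x, ‖F (y, x)‖ ∂μ) μ := by
    refine (hqint.const_mul (momInt ω j)).congr ?_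
    filter_upwards [ae_restrict_mem measurableSet_Ioi] with y hy
    exact (cond2calc y hy).symm
  have hF_int : Integrable F (μ.prod μ) := (integrable_prod_iff hmeas).2 ⟨cond1, cond2⟩
  have hmargeq : (fun x : ℝ => ∫ y, F (y, x) ∂μ) = fun x => x ^ j * mconvR ω ql x := by
    funext x
    simp only [hF, mconvR]
    exact integral_const_mul _ _
  have hmarg : Integrable (fun x : ℝ => x ^ j * mconvR ω ql x) μ := by
    rw [← hmargeq]; exact hF_int.integral_prod_right
  refine ⟨hmarg, ?_⟩
  have hswap : (∫ y, ∫ x, F (y, x) ∂μ ∂μ) = ∫ x, ∫ y, F (y, x) ∂μ ∂μ :=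
    integral_integral_swap (f := fun y x => F (y, x)) hF_int
  have hlhs : (∫ x in Ioi (0:ℝ), x ^ j * mconvR ω ql x) = ∫ y, ∫ x, F (y, x) ∂μ ∂μ := by
    rw [hswap]
    exact congrArg (fun f => ∫ x, f x ∂μ) hmargeq.symm
  rw [hlhs]
  have hinner : ∀ᵐ y ∂μ, (∫ x, F (y, x) ∂μ) = momInt ω j * (y ^ j * ql y) := by
    filter_upwards [ae_restrict_mem measurableSet_Ioi] with y hy
    have he : (∫ x, F (y, x) ∂μ) = ∫ x, (ql y / y) * (x ^ j * ω (x / y)) ∂μ := by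
      refine integral_congr_ae (ae_of_all _ fun x => ?_)
      simp only [hF]; ring
    rw [he, integral_const_mul, subst_eq ω j hy]
    have hy0 : y ≠ 0 := ne_of_gt hy
    field_simp
    ring
  rw [integral_congr_ae hinner, integral_const_mul]

/-- transformation of a bi-orthogonal system under multiplicative
convolution with a weight `ω`. -/
theorem biorthogonal_system_transform
    (n : ℕ) (hn : 1 ≤ n) (q : Fin n → ℝ → ℝ)
    (hq_meas : ∀ k, Measurable (q k))
    (hq_int : ∀ j k : Fin n, IntegrableOn (fun x : ℝ => x ^ (j : ℕ) * |q k x|) (Set.Ioi 0))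
    (a : Fin n → Fin n → ℝ) (ha : ∀ k, a k k = 1)
    (ω : ℝ → ℝ) (hω_meas : Measurable ω) (hω_nonneg : ∀ x ∈ Set.Ioi (0:ℝ), 0 ≤ ω x)
    (hω_ne : ¬ (∀ᵐ x ∂(volume.restrict (Set.Ioi (0:ℝ))), ω x = 0))
    (hω_int : ∀ j : Fin n, IntegrableOn (fun x : ℝ => x ^ (j : ℕ) * ω x) (Set.Ioi 0))
    (horth : ∀ k l : Fin n,
      (∫ x in Set.Ioi (0:ℝ), (∑ j ∈ Finset.Iic k, a j k * x ^ (j : ℕ)) * q l x)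
        = if k = l then 1 else 0) :
    ∀ k l : Fin n,
      (∫ x in Set.Ioi (0:ℝ),
          (∑ j ∈ Finset.Iic k, momInt ω k * a j k / momInt ω j * x ^ (j : ℕ)) *
            (mconvR ω (q l) x / momInt ω l))
        = if k = l then 1 else 0 := by
  intro k l
  have hMpos : ∀ j : Fin n, 0 < momInt ω j :=
    fun j => momInt_pos ω hω_meas hω_nonneg hω_ne j (hω_int j)
  have hkey : ∀ j : Fin n,
      IntegrableOn (fun x : ℝ => x ^ (j : ℕ) * mconvR ω (q l) x) (Ioi 0) ∧
      (∫ x in Ioi (0:ℝ), x ^ (j : ℕ) * mconvR ω (q l) x)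
        = momInt ω j * ∫ x in Ioi (0:ℝ), x ^ (j : ℕ) * q l x :=
    fun j => key ω (q l) hω_meas hω_nonneg (hq_meas l) j (hω_int j) (hq_int j l)
  have hql_int : ∀ j : Fin n, IntegrableOn (fun x : ℝ => x ^ (j : ℕ) * q l x) (Ioi 0) := by
    intro j
    refine Integrable.mono' (hq_int j l) ?_ ?_
    · exact ((measurable_id.pow_const _).mul (hq_meas l)).aestronglyMeasurable
    · filter_upwards [ae_restrict_mem measurableSet_Ioi] with x hx
      rw [Real.norm_eq_abs, abs_mul, abs_of_nonneg (pow_nonneg (le_of_lt hx) _)]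
  have h1 : ∀ x : ℝ,
      (∑ j ∈ Finset.Iic k, momInt ω k * a j k / momInt ω j * x ^ (j : ℕ)) *
          (mconvR ω (q l) x / momInt ω l)
        = ∑ j ∈ Finset.Iic k, (momInt ω k * a j k / momInt ω j / momInt ω l) *
            (x ^ (j : ℕ) * mconvR ω (q l) x) := by
    intro x; rw [Finset.sum_mul]; exact Finset.sum_congr rfl fun j _ => by ring
  simp only [h1]
  rw [integral_finset_sum _ (fun j _ => ((hkey j).1).const_mul _)]
  simp only [integral_const_mul, (fun j : Fin n => (hkey j).2)]
  have h2 : ∀ j ∈ Finset.Iic k,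
      momInt ω k * a j k / momInt ω j / momInt ω l *
          (momInt ω j * ∫ x in Ioi (0:ℝ), x ^ (j : ℕ) * q l x)
        = (momInt ω k / momInt ω l) * (a j k * ∫ x in Ioi (0:ℝ), x ^ (j : ℕ) * q l x) := by
    intro j _
    have h0 : momInt ω (j : ℕ) ≠ 0 := (hMpos j).ne'
    have h0l : momInt ω (l : ℕ) ≠ 0 := (hMpos l).ne'
    field_simp
  rw [Finset.sum_congr rfl h2, ← Finset.mul_sum]
  have h3 : (∑ j ∈ Finset.Iic k, a j k * ∫ x in Ioi (0:ℝ), x ^ (j : ℕ) * q l x)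
      = if k = l then 1 else 0 := by
    rw [← horth k l]
    rw [show (fun x : ℝ => (∑ j ∈ Finset.Iic k, a j k * x ^ (j : ℕ)) * q l x)
        = fun x => ∑ j ∈ Finset.Iic k, a j k * (x ^ (j : ℕ) * q l x) from
      funext fun x => by rw [Finset.sum_mul]; exact Finset.sum_congr rfl fun j _ => by ring]
    rw [integral_finset_sum _ (fun j _ => (hql_int j).const_mul _)]
    exact Finset.sum_congr rfl fun j _ => (integral_const_mul _ _).symm
  rw [h3]
  rcases eq_or_ne k l with rfl | hkl
  · simp [div_self (hMpos k).ne']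
  · simp [hkl]

end
end
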